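/- arXiv:2308.09371 — 13 statements merged into one kernel-verified Lean document; each statement's English description precedes it below -/
import Mathlib

section
/- Let A be a commutative ring, n ≥ 1, and F an n×n matrix over A with F² = F. Define r_0, …, r_n ∈ A by the polynomial identity det(I_n + X·F) = Σ_{i=0}^n r_i (1+X)^i in A[X]. Then (r_0, r_1, …, r_n) is a fundamental system of orthogonal idempotents of A: r_0 + r_1 + ⋯ + r_n = 1 and r_i r_j = 0 whenever i ≠ j (in particular each r_i is idempotent). -/
open Polynomial Matrix Finset

lemma eval2_det_aux {A B : Type*} [CommRing A] [CommRing B] (f : A →+* B) (z : B)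
    {n : ℕ} (F : Matrix (Fin n) (Fin n) A) :
    eval₂ f z (1 + (X : A[X]) • F.map C).det = (1 + z • F.map f).det := by
  rw [← coe_eval₂RingHom, RingHom.map_det]
  congr 1
  ext i j
  simp [Matrix.map_apply, Matrix.add_apply, Matrix.smul_apply, Matrix.one_apply,
    apply_ite (eval₂ f z), smul_eq_mul]
  ring

lemma coeff_sum_aux {R : Type*} [CommRing R] {m : ℕ} (g : Fin m → R) (j₀ : Fin m) :
    (∑ j : Fin m, C (g j) * X ^ (j : ℕ)).coeff (j₀ : ℕ) = g j₀ := by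
  rw [finset_sum_coeff, Finset.sum_eq_single j₀]
  · simp [coeff_C_mul, coeff_X_pow]
  · intro j _ hj
    have : (j₀ : ℕ) ≠ (j : ℕ) := fun h => hj (Fin.ext h.symm)
    simp [coeff_C_mul, coeff_X_pow, this]
  · simp

/-- **Theorem 3 (first part).** For an idempotent `n × n` matrix `F` over a commutative
ring `A`, the coefficients `r 0, …, r n` defined by
`det(I + X • F) = ∑ i, r i • (1 + X) ^ i` form a fundamental system of orthogonal
idempotents: they sum to `1` and pairwise products vanish. -/
theorem fundamental_system_of_orthogonal_idempotents_of_idempotent_matrix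
    {A : Type*} [CommRing A] {n : ℕ} (hn : 1 ≤ n)
    (F : Matrix (Fin n) (Fin n) A) (hF : F * F = F)
    (r : Fin (n + 1) → A)
    (hr : (1 + (Polynomial.X : A[X]) • F.map Polynomial.C).det
        = ∑ i : Fin (n + 1), Polynomial.C (r i) * (1 + Polynomial.X) ^ (i : ℕ)) :
    (∑ i : Fin (n + 1), r i) = 1 ∧
      ∀ i j : Fin (n + 1), i ≠ j → r i * r j = 0 := by
  constructor
  · -- evaluate at X = 0
    have h0 := congrArg (eval₂ (RingHom.id A) 0) hr
    rw [eval2_det_aux] at h0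
    simp only [eval₂_finset_sum, eval₂_mul, eval₂_C, eval₂_pow, eval₂_add, eval₂_one,
      eval₂_X, add_zero, one_pow, mul_one] at h0
    simp only [zero_smul, add_zero, Matrix.det_one] at h0
    exact h0.symm
  · intro i j hij
    -- work in A[X][Y]
    set f : A →+* A[X][X] := (C : A[X] →+* A[X][X]).comp (C : A →+* A[X]) with hf
    set M : Matrix (Fin n) (Fin n) A[X][X] := F.map f with hMdef
    have hM : M * M = M := by
      rw [hMdef, ← Matrix.map_mul, hF]
    have h1 : ∀ z : A[X][X], (1 + z • M).det
        = ∑ i : Fin (n + 1), (C (C (r i)) : A[X][X]) * (1 + z) ^ (i : ℕ) := by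
      intro z
      have := congrArg (eval₂ f z) hr
      rw [eval2_det_aux] at this
      simpa [hf, hMdef, eval₂_finset_sum, eval₂_mul, eval₂_C, eval₂_pow, eval₂_add,
        eval₂_one, eval₂_X, RingHom.coe_comp, Function.comp] using this
    have key : ∀ z₁ z₂ : A[X][X],
        (1 + z₁ • M) * (1 + z₂ • M) = 1 + (z₁ + z₂ + z₁ * z₂) • M := by
      intro z₁ z₂
      have hs : (z₁ • M) * (z₂ • M) = (z₁ * z₂) • M := by
        rw [smul_mul_smul_comm, hM]
      simp only [mul_add, add_mul, one_mul, mul_one, hs, add_smul]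
      abel
    have hmul : (∑ i : Fin (n + 1), (C (C (r i)) : A[X][X]) * (C X) ^ (i : ℕ))
        * (∑ j : Fin (n + 1), (C (C (r j)) : A[X][X]) * X ^ (j : ℕ))
        = ∑ k : Fin (n + 1), (C (C (r k)) : A[X][X]) * (C X * X) ^ (k : ℕ) := by
      have hd := congrArg Matrix.det (key (C X - 1) (X - 1))
      rw [Matrix.det_mul, h1, h1] at hd
      have e : (C X - 1 : A[X][X]) + (X - 1) + (C X - 1) * (X - 1) = C X * X - 1 := by
        ring
      rw [e, h1] at hd
      have e2 : ∀ p : A[X][X], 1 + (p - 1) = p := fun p => by ring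
      simp only [e2] at hd
      exact hd
    -- extract coefficients
    have := congrArg (fun p : A[X][X] => (p.coeff (j : ℕ)).coeff (i : ℕ)) hmul
    -- rewrite LHS first factor as C of a polynomial
    have lhs1 : (∑ i : Fin (n + 1), (C (C (r i)) : A[X][X]) * (C X) ^ (i : ℕ))
        = C (∑ i : Fin (n + 1), (C (r i) : A[X]) * X ^ (i : ℕ)) := by
      rw [map_sum]
      refine Finset.sum_congr rfl fun i _ => ?_
      rw [← C_pow, ← C_mul]
    have rhs1 : (∑ k : Fin (n + 1), (C (C (r k)) : A[X][X]) * (C X * X) ^ (k : ℕ))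
        = ∑ k : Fin (n + 1), (C ((C (r k) : A[X]) * X ^ (k : ℕ)) : A[X][X]) * X ^ (k : ℕ) := by
      refine Finset.sum_congr rfl fun k _ => ?_
      rw [mul_pow, ← C_pow, ← mul_assoc, ← C_mul]
    rw [lhs1, rhs1] at this
    rw [coeff_C_mul, coeff_sum_aux, coeff_sum_aux] at this
    rw [coeff_mul_C, coeff_sum_aux] at this
    rw [coeff_C_mul, coeff_X_pow] at this
    have hij' : (i : ℕ) ≠ (j : ℕ) := fun h => hij (Fin.ext h)
    simpa [hij'] using this
end

section
/- Let A be a commutative ring, F an n×n matrix over A with F² = F, and r_0, …, r_n ∈ A defined by det(I_n + X·F) = Σ_{i=0}^n r_i (1+X)^i in A[X]. Then for every k with 0 ≤ k ≤ n and every choice of k+1 row indices and k+1 column indices, the corresponding (k+1)×(k+1) minor of F, multiplied by r_k, is zero; equivalently, all (k+1)×(k+1) minors of the matrix r_k·F vanish. -/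
open Polynomial Matrix Finset


private lemma det_mul_eq_zero_of_lt {A : Type*} [CommRing A] {m p : ℕ} (h : m < p)
    (P : Matrix (Fin p) (Fin m) A) (Q : Matrix (Fin m) (Fin p) A) : (P * Q).det = 0 := by
  set P' : Matrix (Fin p) (Fin p) A :=
    Matrix.of fun i j => if hj : (j : ℕ) < m then P i ⟨j, hj⟩ else 0 with hP'
  set Q' : Matrix (Fin p) (Fin p) A :=
    Matrix.of fun i j => if hi : (i : ℕ) < m then Q ⟨i, hi⟩ j else 0 with hQ'
  have hPQ : P * Q = P' * Q' := by
    ext i j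
    rw [Matrix.mul_apply, Matrix.mul_apply]
    have hterm : ∀ l : Fin p, P' i l * Q' l j
        = (fun t : ℕ => if ht : t < m then P i ⟨t, ht⟩ * Q ⟨t, ht⟩ j else 0) (l : ℕ) := by
      intro l
      by_cases hl : (l : ℕ) < m <;> simp [hP', hQ', hl]
    rw [Finset.sum_congr rfl fun l _ => hterm l]
    rw [Fin.sum_univ_eq_sum_range (fun t => if ht : t < m then P i ⟨t, ht⟩ * Q ⟨t, ht⟩ j else 0) p]
    rw [← Finset.sum_subset (Finset.range_subset_range.2 h.le) (by
      intro t _ ht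
      rw [Finset.mem_range] at ht
      simp [ht])]
    rw [← Fin.sum_univ_eq_sum_range (fun t => if ht : t < m then P i ⟨t, ht⟩ * Q ⟨t, ht⟩ j else 0) m]
    apply Finset.sum_congr rfl
    intro l _
    simp
  have hPdet : P'.det = 0 := by
    apply Matrix.det_eq_zero_of_column_eq_zero ⟨m, h⟩
    intro i
    simp [hP']
  rw [hPQ, Matrix.det_mul, hPdet, zero_mul]

/-- **Theorem 3 (second part).** For an idempotent `n × n` matrix `F` over a commutative
ring `A`, with `r 0, …, r n` defined by `det(I + X • F) = ∑ i, r i • (1 + X) ^ i`,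
every `(k+1) × (k+1)` minor of `F` multiplied by `r k` vanishes. -/
theorem minors_mul_idempotent_eq_zero_of_idempotent_matrix
    {A : Type*} [CommRing A] {n : ℕ}
    (F : Matrix (Fin n) (Fin n) A) (hF : F * F = F)
    (r : Fin (n + 1) → A)
    (hr : (1 + (Polynomial.X : A[X]) • F.map Polynomial.C).det
        = ∑ i : Fin (n + 1), Polynomial.C (r i) * (1 + Polynomial.X) ^ (i : ℕ)) :
    ∀ (k : Fin (n + 1)) (ri ci : Fin ((k : ℕ) + 1) → Fin n),
      Function.Injective ri → Function.Injective ci →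
      r k * (F.submatrix ri ci).det = 0 := by
  intro k ri ci _ _
  set x : A := r k * (F.submatrix ri ci).det with hx
  -- the matrices K s and E s
  set E : Finset (Fin n) → Matrix (Fin n) (Fin n) A :=
    fun s => Matrix.diagonal (fun i => if i ∈ s then (1 : A) else 0) with hE
  set K : Finset (Fin n) → Matrix (Fin n) (Fin n) A :=
    fun s => Matrix.of fun i j => if i ∈ s then F i j else (1 - F) i j with hK
  -- K s * F = E s * K s
  have hKF : ∀ s, K s * F = E s * K s := by
    intro s
    refine Matrix.ext fun i j => ?_
    rw [Matrix.mul_apply, hE, Matrix.diagonal_mul]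
    by_cases hi : i ∈ s
    · have : ∀ l, K s i l * F l j = F i l * F l j := by intro l; simp [hK, hi]
      rw [Finset.sum_congr rfl fun l _ => this l, ← Matrix.mul_apply, hF]
      simp [hK, hi]
    · have : ∀ l, K s i l * F l j = (1 - F) i l * F l j := by intro l; simp [hK, hi]
      rw [Finset.sum_congr rfl fun l _ => this l, ← Matrix.mul_apply]
      have h0 : (1 - F) * F = 0 := by
        rw [sub_mul, one_mul, hF, sub_self]
      simp [h0, hK, hi]
  -- Claim 1 : the determinants of K s sum to 1
  have claim1 : ∑ s : Finset (Fin n), (K s).det = 1 := by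
    have hmap := (Matrix.detRowAlternating :
        (Fin n → A) [⋀^Fin n]→ₗ[A] A).toMultilinearMap.map_add_univ
        (fun i => F i) (fun i => (1 - F) i)
    have h1 : ((fun i => F i) + fun i => (1 - F) i) = (1 : Matrix (Fin n) (Fin n) A) := by
      funext i j
      show F i j + (1 - F) i j = (1 : Matrix (Fin n) (Fin n) A) i j
      rw [Matrix.sub_apply]; ring
    rw [h1] at hmap
    have h2 : ∀ s : Finset (Fin n),
        (s.piecewise (fun i => F i) fun i => (1 - F) i) = K s := by
      intro s
      funext i j
      by_cases hi : i ∈ s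
      · rw [s.piecewise_eq_of_mem _ _ hi]; simp [hK, hi]
      · rw [s.piecewise_eq_of_notMem _ _ hi]; simp [hK, hi]
    calc ∑ s : Finset (Fin n), (K s).det
        = ∑ s : Finset (Fin n), Matrix.detRowAlternating
            (s.piecewise (fun i => F i) fun i => (1 - F) i) := by
          refine Finset.sum_congr rfl fun s _ => ?_; rw [h2 s]; rfl
      _ = Matrix.detRowAlternating (1 : Matrix (Fin n) (Fin n) A) := hmap.symm
      _ = 1 := Matrix.det_one
  -- the key polynomial identity
  have main : ∀ s : Finset (Fin n),
      C ((K s).det) * (∑ i : Fin (n + 1), C (r i) * X ^ (i : ℕ))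
        = X ^ s.card * C ((K s).det) := by
    intro s
    -- hD : det (1 + (X-1) • F') = ∑ C (r i) * X ^ i
    have hD : (1 + ((X : A[X]) - 1) • F.map C).det
        = ∑ i : Fin (n + 1), C (r i) * X ^ (i : ℕ) := by
      have φdet := (Polynomial.aeval ((X : A[X]) - 1)).toRingHom.map_det
        (1 + (Polynomial.X : A[X]) • F.map Polynomial.C)
      rw [RingHom.mapMatrix_apply] at φdet
      have hmat : ((1 + (Polynomial.X : A[X]) • F.map Polynomial.C).map
          (Polynomial.aeval ((X : A[X]) - 1)).toRingHom)
          = 1 + ((X : A[X]) - 1) • F.map C := by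
        refine Matrix.ext fun i j => ?_
        simp only [Matrix.map_apply, Matrix.add_apply, Matrix.smul_apply, Matrix.one_apply,
          smul_eq_mul, AlgHom.toRingHom_eq_coe, RingHom.coe_coe,
          map_add, _root_.map_mul, apply_ite, _root_.map_one, map_zero, aeval_X, aeval_C,
          Polynomial.algebraMap_eq]
      rw [hr, hmat] at φdet
      rw [← φdet]
      simp only [AlgHom.toRingHom_eq_coe, RingHom.coe_coe, map_sum, _root_.map_mul, map_pow,
        map_add, _root_.map_one, aeval_C, aeval_X, Polynomial.algebraMap_eq]
      have h1X : (1 : A[X]) + (X - 1) = X := by ring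
      rw [h1X]
    -- determinant of the diagonal part
    have hEdet : (1 + ((X : A[X]) - 1) • (E s).map C).det = X ^ s.card := by
      have hdiag : (1 : Matrix (Fin n) (Fin n) A[X]) + ((X : A[X]) - 1) • (E s).map C
          = Matrix.diagonal (fun i => if i ∈ s then (X : A[X]) else 1) := by
        refine Matrix.ext fun i j => ?_
        simp only [Matrix.add_apply, Matrix.smul_apply, Matrix.map_apply, hE,
          Matrix.diagonal_apply, Matrix.one_apply, smul_eq_mul, apply_ite C,
          _root_.map_one, map_zero]
        by_cases hij : i = j
        · subst hij
          by_cases hi : i ∈ s <;> simp [hi]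
        · simp [hij]
      rw [hdiag, Matrix.det_diagonal, Finset.prod_ite (fun _ => (X : A[X])) (fun _ => (1 : A[X])),
        Finset.prod_const, Finset.prod_const, one_pow, mul_one, Finset.filter_univ_mem]
    -- the matrix identity over A[X]
    have hmatid : (K s).map C * (1 + ((X : A[X]) - 1) • F.map C)
        = (1 + ((X : A[X]) - 1) • (E s).map C) * ((K s).map C) := by
      have h1 : (K s).map C * F.map C = (E s).map C * (K s).map C := by
        rw [← Matrix.map_mul, ← Matrix.map_mul, hKF s]
      calc (K s).map C * (1 + ((X : A[X]) - 1) • F.map C)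
          = (K s).map C + ((X : A[X]) - 1) • ((K s).map C * F.map C) := by
            rw [mul_add, mul_one, mul_smul_comm]
        _ = (K s).map C + ((X : A[X]) - 1) • ((E s).map C * (K s).map C) := by rw [h1]
        _ = (1 + ((X : A[X]) - 1) • (E s).map C) * ((K s).map C) := by
            rw [add_mul, one_mul, smul_mul_assoc]
    have hdet := congrArg Matrix.det hmatid
    have hCdet : ((K s).map (C : A →+* A[X])).det = C ((K s).det) := by
      rw [← RingHom.mapMatrix_apply, ← RingHom.map_det]
    rw [Matrix.det_mul, Matrix.det_mul, hD, hEdet, hCdet] at hdet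
    exact hdet
  -- key : for every s, (det K s)^(k+1) * x = 0
  have key : ∀ s : Finset (Fin n), ((K s).det) ^ ((k : ℕ) + 1) * x = 0 := by
    intro s
    by_cases hcard : s.card = (k : ℕ)
    · -- rank factorization case
      have e := s.equivFin
      set f : Fin s.card → Fin n := fun j => ((e.symm j : s) : Fin n) with hf
      have hfinj : Function.Injective f :=
        Subtype.val_injective.comp e.symm.injective
      have hfmem : ∀ j, f j ∈ s := fun j => (e.symm j).2
      have hfsurj : ∀ i ∈ s, ∃ j, f j = i := by
        intro i hi
        exact ⟨e ⟨i, hi⟩, by simp [hf]⟩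
      set Q : Matrix (Fin n) (Fin s.card) A :=
        Matrix.of fun i j => if i = f j then 1 else 0 with hQ
      have hQQ : Q * Qᵀ = E s := by
        refine Matrix.ext fun i l => ?_
        rw [Matrix.mul_apply]
        simp only [hQ, Matrix.transpose_apply, Matrix.of_apply, hE, Matrix.diagonal_apply]
        by_cases hi : i ∈ s
        · obtain ⟨j₀, hj₀⟩ := hfsurj i hi
          rw [Finset.sum_eq_single j₀]
          · rw [if_pos hj₀.symm, one_mul, hj₀]
            by_cases hil : i = l
            · subst hil; simp [hi]
            · rw [if_neg fun h => hil h.symm, if_neg hil]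
          · intro j _ hj
            rw [if_neg, zero_mul]
            intro hij
            exact hj (hfinj (hj₀.trans hij)).symm
          · intro h; exact absurd (Finset.mem_univ j₀) h
        · rw [Finset.sum_eq_zero (fun j _ => by
            rw [if_neg (fun hij : i = f j => hi (hij ▸ hfmem j)), zero_mul])]
          split_ifs with h1 <;> simp [hi]
      have hfact : (K s).det • F = ((K s).adjugate * Q) * (Qᵀ * K s) := by
        calc (K s).det • F = ((K s).det • (1 : Matrix (Fin n) (Fin n) A)) * F := by
              rw [smul_mul_assoc, one_mul]
          _ = ((K s).adjugate * K s) * F := by rw [Matrix.adjugate_mul]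
          _ = (K s).adjugate * (E s * K s) := by rw [Matrix.mul_assoc, hKF s]
          _ = (K s).adjugate * ((Q * Qᵀ) * K s) := by rw [hQQ]
          _ = ((K s).adjugate * Q) * (Qᵀ * K s) := by
              rw [Matrix.mul_assoc Q, ← Matrix.mul_assoc ((K s).adjugate)]
      have h0 : (((K s).det • F).submatrix ri ci).det = 0 := by
        rw [hfact, Matrix.submatrix_mul _ _ ri id ci Function.bijective_id]
        exact det_mul_eq_zero_of_lt (by rw [hcard]; exact Nat.lt_succ_self _) _ _
      have h1 : (((K s).det • F).submatrix ri ci) = (K s).det • (F.submatrix ri ci) := rfl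
      rw [h1, Matrix.det_smul, Fintype.card_fin] at h0
      calc ((K s).det) ^ ((k : ℕ) + 1) * x
          = r k * (((K s).det) ^ ((k : ℕ) + 1) * (F.submatrix ri ci).det) := by
            rw [hx]; ring
        _ = 0 := by rw [h0, mul_zero]
    · -- coefficient comparison case
      have main2 : C ((K s).det) * (∑ i : Fin (n + 1), C (r i) * X ^ (i : ℕ))
          = C ((K s).det) * X ^ s.card := (main s).trans (mul_comm _ _)
      have hco := congrArg (fun p : A[X] => p.coeff (k : ℕ)) main2
      rw [Polynomial.coeff_C_mul, Polynomial.coeff_C_mul, Polynomial.finset_sum_coeff,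
        Polynomial.coeff_X_pow] at hco
      have hL : ∀ i : Fin (n + 1), (C (r i) * X ^ (i : ℕ)).coeff (k : ℕ)
          = if k = i then r i else 0 := by
        intro i
        rw [Polynomial.coeff_C_mul, Polynomial.coeff_X_pow]
        split_ifs with h1 h2 h3
        · simp
        · exact absurd (Fin.val_eq_val k i |>.1 h1) h2
        · exact absurd (congrArg Fin.val h3) h1
        · simp
      rw [Finset.sum_congr rfl fun i _ => hL i,
        Finset.sum_ite_eq Finset.univ k (fun i => r i), if_pos (Finset.mem_univ k),
        if_neg (fun h => hcard h.symm), mul_zero] at hco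
      calc ((K s).det) ^ ((k : ℕ) + 1) * x
          = (((K s).det) ^ (k : ℕ) * (F.submatrix ri ci).det) * ((K s).det * r k) := by
            rw [hx]; ring
        _ = 0 := by rw [hco, mul_zero]
  -- conclusion via radicals
  have hrad : ∀ s : Finset (Fin n), (K s).det ∈ (Ideal.torsionOf A A x).radical :=
    fun s => ⟨(k : ℕ) + 1, (Ideal.mem_torsionOf_iff x _).2 (by rw [smul_eq_mul]; exact key s)⟩
  have hone : (1 : A) ∈ (Ideal.torsionOf A A x).radical := by
    rw [← claim1]
    exact Ideal.sum_mem _ fun s _ => hrad s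
  have : Ideal.torsionOf A A x = ⊤ := by
    rw [← Ideal.radical_eq_top]
    exact (Ideal.eq_top_iff_one _).2 hone
  have h1x : (1 : A) ∈ Ideal.torsionOf A A x := this ▸ Submodule.mem_top
  have := (Ideal.mem_torsionOf_iff x (1 : A)).1 h1x
  rwa [one_smul] at this
end

section
/- Let A be a commutative ring, F an n×n matrix over A with F² = F, M ⊆ A^n the image of the A-linear map given by F, and r_0, …, r_n ∈ A defined by det(I_n + X·F) = Σ_{i=0}^n r_i (1+X)^i in A[X]. Fix k with 0 ≤ k ≤ n, let t be the determinant of a principal (diagonal) k×k submatrix of F (obtained by selecting the same set of k rows and columns), and set s = r_k·t. Then the localized module M_s is a free module of rank k over the localization A_s (with the convention that over the trivial ring the zero module is free of every rank). -/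
open Polynomial Matrix Finset

lemma aux_key {A : Type*} [CommRing A] {n : ℕ}
    (F : Matrix (Fin n) (Fin n) A)
    (r : Fin (n + 1) → A)
    (hr : (1 + (Polynomial.X : A[X]) • F.map Polynomial.C).det
        = ∑ i : Fin (n + 1), Polynomial.C (r i) * (1 + Polynomial.X) ^ (i : ℕ))
    (p : Polynomial (Polynomial A)) :
    (1 + p • F.map (fun a => C (C a))).det
      = ∑ i : Fin (n + 1), C (C (r i)) * (1 + p) ^ (i : ℕ) := by
  have h := congrArg (⇑(aeval (R := A) p)) hr
  rw [show ⇑(aeval (R := A) p) = ⇑(aeval (R := A) p).toRingHom from rfl,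
    RingHom.map_det, RingHom.mapMatrix_apply, AlgHom.toRingHom_eq_coe, RingHom.coe_coe] at h
  have hmap : (1 + (Polynomial.X : A[X]) • F.map Polynomial.C).map
      (⇑(aeval (R := A) p)) = 1 + p • F.map (fun a => C (C a)) := by
    refine Matrix.ext fun i j => ?_
    simp only [Matrix.map_apply, Matrix.add_apply, Matrix.smul_apply, Matrix.one_apply,
      smul_eq_mul, AlgHom.toRingHom_eq_coe, RingHom.coe_coe]
    rw [_root_.map_add, _root_.map_mul, aeval_X, aeval_C]
    congr 1
    · split <;> simp
  rw [hmap] at h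
  rw [h, _root_.map_sum]
  refine Finset.sum_congr rfl fun i _ => ?_
  rw [_root_.map_mul, _root_.map_pow, _root_.map_add, _root_.map_one, aeval_X, aeval_C,
    Polynomial.algebraMap_apply]
  simp

lemma aux_orth {A : Type*} [CommRing A] {n : ℕ}
    (F : Matrix (Fin n) (Fin n) A) (hF : F * F = F)
    (r : Fin (n + 1) → A)
    (hr : (1 + (Polynomial.X : A[X]) • F.map Polynomial.C).det
        = ∑ i : Fin (n + 1), Polynomial.C (r i) * (1 + Polynomial.X) ^ (i : ℕ)) :
    ∀ i j : Fin (n + 1), r i * r j = if i = j then r i else 0 := by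
  classical
  set G : Matrix (Fin n) (Fin n) (Polynomial (Polynomial A)) :=
    F.map (fun a => C (C a)) with hG
  have hGG : G * G = G := by
    have : (fun a : A => (C (C a) : Polynomial (Polynomial A)))
        = ⇑((Polynomial.C.comp (Polynomial.C : A →+* Polynomial A))) := rfl
    rw [hG, this, ← Matrix.map_mul, hF]
  set u : Polynomial (Polynomial A) := C X with hu
  set v : Polynomial (Polynomial A) := X with hv
  have hmul : (1 + u • G) * (1 + v • G) = 1 + (u + v + u * v) • G := by
    rw [mul_add, mul_one, add_mul, one_mul, Matrix.smul_mul, Matrix.mul_smul, hGG,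
      smul_smul]
    rw [add_smul, add_smul]
    abel
  have key := aux_key F r hr
  have main : (∑ i : Fin (n + 1), C (C (r i)) * (1 + u) ^ (i : ℕ))
      * (∑ j : Fin (n + 1), C (C (r j)) * (1 + v) ^ (j : ℕ))
      = ∑ i : Fin (n + 1), C (C (r i)) * ((1 + u) * (1 + v)) ^ (i : ℕ) := by
    rw [← key u, ← key v, ← Matrix.det_mul, hmul, key (u + v + u * v)]
    congr 1
    funext i
    congr 2
    ring
  -- apply the shift τ
  set σ : Polynomial A →ₐ[A] Polynomial A := aeval (X - 1) with hσ
  set τ1 : Polynomial (Polynomial A) →+* Polynomial (Polynomial A) :=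
    Polynomial.mapRingHom σ.toRingHom with hτ1
  set τ2 : Polynomial (Polynomial A) →+* Polynomial (Polynomial A) :=
    (aeval (R := Polynomial A) (X - 1 : Polynomial (Polynomial A))).toRingHom with hτ2
  set τ : Polynomial (Polynomial A) →+* Polynomial (Polynomial A) := τ2.comp τ1 with hτ
  have hτCC : ∀ a : A, τ (C (C a)) = C (C a) := by
    intro a
    simp [hτ, hτ1, hτ2, hσ, coe_mapRingHom]
  have hτu : τ (1 + u) = C X := by
    simp only [hτ, hτ1, hτ2, hσ, RingHom.comp_apply, coe_mapRingHom, _root_.map_add,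
      _root_.map_one, hu, map_C, AlgHom.toRingHom_eq_coe, RingHom.coe_coe, aeval_C, aeval_X]
    rw [map_sub, Polynomial.algebraMap_eq, _root_.map_one]
    ring
  have hτv : τ (1 + v) = X := by
    simp only [hτ, hτ1, hτ2, hσ, RingHom.comp_apply, coe_mapRingHom, _root_.map_add,
      _root_.map_one, hv, map_X, AlgHom.toRingHom_eq_coe, RingHom.coe_coe, aeval_X]
    ring
  have main2 : (∑ i : Fin (n + 1), C (C (r i)) * (C X : Polynomial (Polynomial A)) ^ (i : ℕ))
      * (∑ j : Fin (n + 1), C (C (r j)) * X ^ (j : ℕ))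
      = ∑ i : Fin (n + 1), C (C (r i)) * ((C X) * X) ^ (i : ℕ) := by
    have := congrArg (⇑τ) main
    rw [_root_.map_mul, _root_.map_sum, _root_.map_sum, _root_.map_sum] at this
    simp only [_root_.map_mul, _root_.map_pow, hτCC, hτu, hτv] at this
    exact this
  intro i j
  have h1 := congrArg (fun q : Polynomial (Polynomial A) => (q.coeff (j : ℕ)).coeff (i : ℕ)) main2
  -- compute both sides
  have hq : ∀ m : Fin (n + 1),
      (∑ i' : Fin (n + 1), (C (r i') : A[X]) * X ^ (i' : ℕ)).coeff (m : ℕ) = r m := by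
    intro m
    rw [finset_sum_coeff, Finset.sum_eq_single m]
    · simp [coeff_C_mul, coeff_X_pow]
    · intro b _ hb
      rw [coeff_C_mul, coeff_X_pow, if_neg (fun h => hb (Fin.val_injective h).symm), mul_zero]
    · simp
  have hL1 : (∑ i' : Fin (n + 1), C (C (r i')) * (C X : Polynomial (Polynomial A)) ^ (i' : ℕ))
      = C (∑ i' : Fin (n + 1), C (r i') * X ^ (i' : ℕ)) := by
    rw [map_sum]
    exact Finset.sum_congr rfl fun i' _ => by rw [← C_pow, ← C_mul]
  have hR1 : (∑ i' : Fin (n + 1), C (C (r i')) * ((C X : Polynomial (Polynomial A)) * X) ^ (i' : ℕ))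
      = ∑ i' : Fin (n + 1), C ((C (r i') : A[X]) * X ^ (i' : ℕ)) * X ^ (i' : ℕ) := by
    refine Finset.sum_congr rfl fun i' _ => ?_
    rw [mul_pow, ← C_pow, ← mul_assoc, ← C_mul]
  rw [hL1, hR1] at main2
  have hg : (∑ j' : Fin (n + 1),
        (C (C (r j')) : Polynomial (Polynomial A)) * X ^ (j' : ℕ)).coeff (j : ℕ) = C (r j) := by
    rw [finset_sum_coeff, Finset.sum_eq_single j]
    · rw [coeff_C_mul, coeff_X_pow, if_pos rfl, mul_one]
    · intro b _ hb
      rw [coeff_C_mul, coeff_X_pow, if_neg (fun h => hb (Fin.val_injective h).symm), mul_zero]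
    · simp
  have hR2 : (∑ i' : Fin (n + 1),
        (C ((C (r i') : A[X]) * X ^ (i' : ℕ)) : Polynomial (Polynomial A)) * X ^ (i' : ℕ)).coeff
        (j : ℕ) = C (r j) * X ^ (j : ℕ) := by
    rw [finset_sum_coeff, Finset.sum_eq_single j]
    · rw [coeff_C_mul, coeff_X_pow, if_pos rfl, mul_one]
    · intro b _ hb
      rw [coeff_C_mul, coeff_X_pow, if_neg (fun h => hb (Fin.val_injective h).symm), mul_zero]
    · simp
  have h1 := congrArg (fun q : Polynomial (Polynomial A) => (q.coeff (j : ℕ)).coeff (i : ℕ)) main2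
  rw [coeff_C_mul, hg, hR2, coeff_mul_C, hq, coeff_C_mul, coeff_X_pow] at h1
  rw [h1]
  by_cases hij : i = j
  · subst hij
    simp
  · rw [if_neg (fun h => hij (Fin.val_injective h)), if_neg hij, mul_zero]

noncomputable def piLocMap {A : Type*} [CommRing A] (S : Submonoid A) (B : Type*) [CommRing B]
    [Algebra A B] (ι : Type*) [Fintype ι] :
    (ι → A) →ₗ[A] (ι → B) :=
  LinearMap.pi fun i => (Algebra.linearMap A B).comp (LinearMap.proj i)

@[simp] lemma piLocMap_apply {A : Type*} [CommRing A] (S : Submonoid A) (B : Type*) [CommRing B]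
    [Algebra A B] (ι : Type*) [Fintype ι] (v : ι → A) (i : ι) :
    piLocMap S B ι v i = algebraMap A B (v i) := rfl

lemma isLocalizedModule_piLocMap {A : Type*} [CommRing A] (S : Submonoid A) (B : Type*)
    [CommRing B] [Algebra A B] [IsLocalization S B] (ι : Type*) [Fintype ι] [DecidableEq ι] :
    IsLocalizedModule S (piLocMap S B ι) := by
  constructor
  · intro x
    rw [Module.End.isUnit_iff]
    obtain ⟨u, hu⟩ := IsLocalization.map_units B x
    constructor
    · intro v w h
      funext i
      have h' := congrFun h i
      simp only [Module.algebraMap_end_apply, Pi.smul_apply, Algebra.smul_def, ← hu] at h'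
      exact (Units.mul_right_inj u).mp h'
    · intro w
      refine ⟨fun i => (↑u⁻¹ : B) * w i, ?_⟩
      funext i
      simp only [Module.algebraMap_end_apply, Pi.smul_apply, Algebra.smul_def, ← hu, ← mul_assoc,
        Units.mul_inv, one_mul]
  · intro y
    choose p hp using fun i => IsLocalization.surj (M := S) (S := B) (y i)
    set a : ι → A := fun i => (p i).1 with ha
    set sa : ι → S := fun i => (p i).2 with hsa
    have h : ∀ i, y i * algebraMap A B (sa i : A) = algebraMap A B (a i) := fun i => hp i
    refine ⟨⟨fun i => a i * ∏ j ∈ Finset.univ.erase i, (sa j : A), ∏ i, sa i⟩, ?_⟩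
    funext i
    simp only [Function.uncurry_apply_pair, Pi.smul_apply, Submonoid.smul_def, Algebra.smul_def,
      piLocMap_apply, _root_.map_mul]
    rw [Submonoid.coe_finset_prod, _root_.map_prod, ← Finset.mul_prod_erase _ _ (Finset.mem_univ i),
      mul_assoc, mul_comm (∏ x ∈ Finset.univ.erase i, algebraMap A B (sa x : A)) (y i),
      ← mul_assoc, mul_comm (algebraMap A B (sa i : A)) (y i), h i, _root_.map_prod]
  · intro a b h
    choose c hc using fun i => IsLocalization.exists_of_eq (M := S) (S := B)
      (congrFun h i : algebraMap A B (a i) = algebraMap A B (b i))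
    refine ⟨∏ i, c i, ?_⟩
    funext i
    simp only [Pi.smul_apply, Submonoid.smul_def, smul_eq_mul, Submonoid.coe_finset_prod]
    have hci : (c i : A) * a i = (c i : A) * b i := hc i
    rw [← Finset.mul_prod_erase _ _ (Finset.mem_univ i), mul_comm ((c i : A)) _, mul_assoc,
      mul_assoc, hci]

noncomputable def linearEquivExtendScalars {A : Type*} [CommRing A] (S : Submonoid A)
    (B : Type*) [CommRing B] [Algebra A B] [IsLocalization S B]
    {M N : Type*} [AddCommMonoid M] [Module A M] [Module B M] [IsScalarTower A B M]
    [AddCommMonoid N] [Module A N] [Module B N] [IsScalarTower A B N]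
    (e : M ≃ₗ[A] N) : M ≃ₗ[B] N :=
  LinearEquiv.ofLinear (e.toLinearMap.extendScalarsOfIsLocalization S B)
    (e.symm.toLinearMap.extendScalarsOfIsLocalization S B)
    (by ext x; simp) (by ext x; simp)

section Main

variable {A : Type*} [CommRing A] {n : ℕ}

set_option maxHeartbeats 1000000 in
theorem aux_main_thm
    (F : Matrix (Fin n) (Fin n) A) (hF : F * F = F)
    (r : Fin (n + 1) → A)
    (hr : (1 + (Polynomial.X : A[X]) • F.map Polynomial.C).det
        = ∑ i : Fin (n + 1), Polynomial.C (r i) * (1 + Polynomial.X) ^ (i : ℕ))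
    (k : Fin (n + 1)) (d : Fin (k : ℕ) → Fin n) (hd : Function.Injective d)
    (t : A) (ht : t = (F.submatrix d d).det)
    (s : A) (hs : s = r k * t) :
    Nonempty (Module.Basis (Fin (k : ℕ)) (Localization (Submonoid.powers s))
      (LocalizedModule (Submonoid.powers s) (LinearMap.range F.mulVecLin))) := by
  classical
  have horth := aux_orth F hF r hr
  set S : Submonoid A := Submonoid.powers s with hSdef
  set φ : A →+* Localization S := algebraMap A (Localization S) with hφ
  -- the images of r k and t are units; r k maps to 1
  have hsu : IsUnit (φ s) :=
    IsLocalization.map_units (M := S) (Localization S) ⟨s, Submonoid.mem_powers s⟩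
  have hrt : φ s = φ (r k) * φ t := by rw [← _root_.map_mul, ← hs]
  have hrku : IsUnit (φ (r k)) := isUnit_of_mul_isUnit_left (hrt ▸ hsu)
  have htu : IsUnit (φ t) := isUnit_of_mul_isUnit_right (hrt ▸ hsu)
  have hrk1 : φ (r k) = 1 := by
    have hsq : φ (r k) * φ (r k) = φ (r k) * 1 := by
      rw [mul_one, ← _root_.map_mul, horth k k, if_pos rfl]
    exact hrku.mul_left_cancel hsq
  have hri0 : ∀ i : Fin (n + 1), i ≠ k → φ (r i) = 0 := by
    intro i hik
    have h0 : φ (r i) * φ (r k) = 0 := by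
      rw [← _root_.map_mul, horth i k, if_neg hik, map_zero]
    rwa [hrk1, mul_one] at h0
  set F' : Matrix (Fin n) (Fin n) (Localization S) := F.map φ with hF'def
  have hF' : F' * F' = F' := by rw [hF'def, ← Matrix.map_mul, hF]
  -- the determinant identity over the localization
  have hdetB : (1 + (X : (Localization S)[X]) • F'.map C).det = (1 + X) ^ (k : ℕ) := by
    have h := congrArg (⇑(mapRingHom φ)) hr
    rw [RingHom.map_det, RingHom.mapMatrix_apply] at h
    have hmap : (1 + (X : A[X]) • F.map C).map (⇑(mapRingHom φ))
        = 1 + (X : (Localization S)[X]) • F'.map C := by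
      refine Matrix.ext fun i j => ?_
      simp only [Matrix.map_apply, Matrix.add_apply, Matrix.smul_apply, Matrix.one_apply,
        smul_eq_mul]
      rw [_root_.map_add, _root_.map_mul, coe_mapRingHom, Polynomial.map_X, Polynomial.map_C]
      congr 1
      split <;> simp
    rw [hmap] at h
    rw [h, _root_.map_sum, Finset.sum_eq_single k]
    · rw [coe_mapRingHom, Polynomial.map_mul, Polynomial.map_pow, Polynomial.map_add,
        Polynomial.map_one, Polynomial.map_X, Polynomial.map_C, hrk1, _root_.map_one, one_mul]
    · intro b _ hb
      rw [coe_mapRingHom, Polynomial.map_mul, Polynomial.map_C, hri0 b hb, map_zero, zero_mul]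
    · intro hk
      exact absurd (Finset.mem_univ k) hk
  -- matrix computations over the localization
  set P : Matrix (Fin (k : ℕ)) (Fin (k : ℕ)) (Localization S) := F'.submatrix d d with hPdef
  have hPdet : IsUnit P.det := by
    have h1 : P = (F.submatrix d d).map φ := rfl
    rw [h1, ← RingHom.mapMatrix_apply, ← RingHom.map_det, ← ht]
    exact htu
  haveI : Invertible P := P.invertibleOfIsUnitDet hPdet
  set Cm : Matrix (Fin n) (Fin (k : ℕ)) (Localization S) :=
    F'.submatrix (id : Fin n → Fin n) d with hCmdef
  set Rm : Matrix (Fin (k : ℕ)) (Fin n) (Localization S) :=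
    F'.submatrix d (id : Fin n → Fin n) with hRmdef
  have hentry : ∀ i j : Fin n, ∑ x : Fin n, F' i x * F' x j = F' i j := by
    intro i j
    have h2 := congrFun (congrFun hF' i) j
    simpa [Matrix.mul_apply] using h2
  have hRC : Rm * Cm = P := by
    refine Matrix.ext fun i j => ?_
    simp only [Matrix.mul_apply, hRmdef, hCmdef, hPdef, Matrix.submatrix_apply, id]
    exact hentry (d i) (d j)
  have hFC : F' * Cm = Cm := by
    refine Matrix.ext fun i j => ?_
    simp only [Matrix.mul_apply, hCmdef, Matrix.submatrix_apply, id]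
    exact hentry i (d j)
  have hRF : Rm * F' = Rm := by
    refine Matrix.ext fun i j => ?_
    simp only [Matrix.mul_apply, hRmdef, Matrix.submatrix_apply, id]
    exact hentry (d i) j
  set Q : Matrix (Fin (k : ℕ)) (Fin n) (Localization S) := ⅟P * Rm with hQdef
  have hQC : Q * Cm = 1 := by rw [hQdef, Matrix.mul_assoc, hRC, invOf_mul_self]
  set E : Matrix (Fin n) (Fin n) (Localization S) := Cm * Q with hEdef
  have hFE : F' * E = E := by rw [hEdef, ← Matrix.mul_assoc, hFC]
  have hEF : E * F' = E := by
    rw [hEdef, hQdef, Matrix.mul_assoc, Matrix.mul_assoc, hRF]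
  have hEE : E * E = E := by
    rw [hEdef, Matrix.mul_assoc, ← Matrix.mul_assoc Q Cm Q, hQC, Matrix.one_mul]
  have hEH : E * (F' - E) = 0 := by rw [Matrix.mul_sub, hEF, hEE, sub_self]
  have hHH : (F' - E) * (F' - E) = F' - E := by
    rw [Matrix.sub_mul, Matrix.mul_sub, Matrix.mul_sub, hF', hFE, hEF, hEE]
    abel
  -- split the determinant
  have hsplit : (1 + (X : (Localization S)[X]) • F'.map C)
      = (1 + (X : (Localization S)[X]) • E.map C)
        * (1 + (X : (Localization S)[X]) • (F' - E).map C) := by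
    have hmapEH : (E.map (C : Localization S →+* (Localization S)[X]))
        * ((F' - E).map C) = 0 := by
      rw [← Matrix.map_mul, hEH]
      refine Matrix.ext fun i j => ?_
      simp
    have hadd : E.map (C : Localization S →+* (Localization S)[X]) + (F' - E).map C
        = F'.map C := by
      refine Matrix.ext fun i j => ?_
      simp [Matrix.map_apply, Matrix.add_apply, Matrix.sub_apply]
    rw [mul_add, mul_one, add_mul, one_mul, Matrix.smul_mul, Matrix.mul_smul, smul_smul,
      hmapEH, smul_zero, add_zero, add_assoc, ← smul_add, hadd]
  have hdetE : (1 + (X : (Localization S)[X]) • E.map C).det = (1 + X) ^ (k : ℕ) := by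
    have h1 : E.map (C : Localization S →+* (Localization S)[X]) = Cm.map C * Q.map C := by
      rw [hEdef, Matrix.map_mul]
    rw [h1, ← Matrix.smul_mul]
    rw [Matrix.det_one_add_mul_comm]
    rw [Matrix.mul_smul, ← Matrix.map_mul, hQC]
    have h2 : ((1 : Matrix (Fin (k : ℕ)) (Fin (k : ℕ)) (Localization S)).map
        (C : Localization S →+* (Localization S)[X])) = 1 :=
      Matrix.map_one _ (map_zero _) (_root_.map_one _)
    rw [h2]
    have h3 : (1 : Matrix (Fin (k : ℕ)) (Fin (k : ℕ)) (Localization S)[X])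
        + (X : (Localization S)[X]) • 1
        = (1 + X : (Localization S)[X]) • (1 : Matrix (Fin (k : ℕ)) (Fin (k : ℕ))
            (Localization S)[X]) := by rw [add_smul, one_smul]
    rw [h3, Matrix.det_smul, Matrix.det_one, mul_one, Fintype.card_fin]
  have hmonic : ((1 + X : (Localization S)[X]) ^ (k : ℕ)).Monic := by
    have : (1 + X : (Localization S)[X]) = X + Polynomial.C 1 := by rw [_root_.map_one]; ring
    rw [this]
    exact (Polynomial.monic_X_add_C 1).pow _
  have hdetH : (1 + (X : (Localization S)[X]) • (F' - E).map C).det = 1 := by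
    have h4 : (1 + (X : (Localization S)[X]) • E.map C).det
        * (1 + (X : (Localization S)[X]) • (F' - E).map C).det
        = (1 + X : (Localization S)[X]) ^ (k : ℕ) * 1 := by
      rw [mul_one, ← Matrix.det_mul, ← hsplit, hdetB]
    rw [hdetE] at h4
    exact hmonic.isRegular.left h4
  -- evaluate at -1
  have hdet1 : (1 - (F' - E)).det = 1 := by
    have h := congrArg (⇑(evalRingHom (-1 : Localization S))) hdetH
    rw [RingHom.map_det, RingHom.mapMatrix_apply, _root_.map_one] at h
    have hmap : (1 + (X : (Localization S)[X]) • (F' - E).map C).map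
        (⇑(evalRingHom (-1 : Localization S))) = 1 - (F' - E) := by
      refine Matrix.ext fun i j => ?_
      simp only [Matrix.map_apply, Matrix.add_apply, Matrix.smul_apply, Matrix.one_apply,
        Matrix.sub_apply, smul_eq_mul, coe_evalRingHom, eval_add, eval_mul, eval_X, eval_C]
      split <;> ring_nf <;> simp [eval_C]
    rwa [hmap] at h
  haveI : Invertible (1 - (F' - E)) :=
    Matrix.invertibleOfIsUnitDet _ (by rw [hdet1]; exact isUnit_one)
  have hZ : (1 - (F' - E)) * (1 - (F' - E)) = 1 - (F' - E) := by
    rw [Matrix.mul_sub, Matrix.mul_one, Matrix.sub_mul, Matrix.one_mul, hHH]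
    abel
  have hH0 : F' - E = 0 := by
    have h1 : (1 : Matrix (Fin n) (Fin n) (Localization S)) - (F' - E) = 1 := by
      calc (1 : Matrix (Fin n) (Fin n) (Localization S)) - (F' - E)
          = (⅟(1 - (F' - E)) * (1 - (F' - E))) * (1 - (F' - E)) := by
            rw [invOf_mul_self, Matrix.one_mul]
        _ = ⅟(1 - (F' - E)) * ((1 - (F' - E)) * (1 - (F' - E))) := by rw [Matrix.mul_assoc]
        _ = ⅟(1 - (F' - E)) * (1 - (F' - E)) := by rw [hZ]
        _ = 1 := invOf_mul_self _
    exact sub_eq_self.mp h1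
  have hFeq : F' = Cm * Q := by rwa [sub_eq_zero] at hH0
  -- module theory
  haveI hloc := isLocalizedModule_piLocMap S (Localization S) (Fin n)
  set fpi := piLocMap S (Localization S) (Fin n) with hfpidef
  have hcomm : ((F'.mulVecLin).restrictScalars A) ∘ₗ fpi = fpi ∘ₗ F.mulVecLin := by
    refine LinearMap.ext fun v => ?_
    funext i
    simp only [LinearMap.comp_apply, LinearMap.restrictScalars_apply, Matrix.mulVecLin_apply,
      hfpidef, piLocMap_apply, Matrix.mulVec, dotProduct, hF'def, Matrix.map_apply]
    rw [_root_.map_sum]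
    exact Finset.sum_congr rfl fun j _ => by rw [_root_.map_mul]
  have hmapeq : IsLocalizedModule.map S fpi fpi F.mulVecLin
      = (F'.mulVecLin).restrictScalars A :=
    IsLocalizedModule.ext (S := S) (f := fpi) (IsLocalizedModule.map_units fpi)
      (by rw [IsLocalizedModule.map_comp, hcomm])
  have hrange : (LinearMap.range F.mulVecLin).localized' (Localization S) S fpi
      = LinearMap.range F'.mulVecLin := by
    rw [LinearMap.localized'_range_eq_range_localizedMap (Localization S) S fpi fpi F.mulVecLin]
    congr 1
    refine LinearMap.ext fun v => ?_
    rw [LinearMap.extendScalarsOfIsLocalization_apply', hmapeq]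
    rfl
  set N : Submodule A (Fin n → A) := LinearMap.range F.mulVecLin with hNdef
  have e1 : LocalizedModule S N ≃ₗ[A] (N.localized' (Localization S) S fpi) :=
    IsLocalizedModule.linearEquiv S (LocalizedModule.mkLinearMap S N)
      (N.toLocalized' (Localization S) S fpi)
  have e1B : LocalizedModule S N ≃ₗ[Localization S] (N.localized' (Localization S) S fpi) :=
    linearEquivExtendScalars S (Localization S) e1
  have hleft : Q.mulVecLin ∘ₗ Cm.mulVecLin = LinearMap.id := by
    rw [← Matrix.mulVecLin_mul, hQC, Matrix.mulVecLin_one]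
  have hinj : Function.Injective Cm.mulVecLin := by
    intro v w hvw
    have h1 : v = Q.mulVecLin (Cm.mulVecLin v) := (LinearMap.congr_fun hleft v).symm
    have h2 : w = Q.mulVecLin (Cm.mulVecLin w) := (LinearMap.congr_fun hleft w).symm
    rw [h1, h2, hvw]
  have hsurj : Function.Surjective Q.mulVecLin := fun v =>
    ⟨Cm.mulVecLin v, LinearMap.congr_fun hleft v⟩
  have hrange2 : LinearMap.range F'.mulVecLin = LinearMap.range Cm.mulVecLin := by
    rw [hFeq, Matrix.mulVecLin_mul, LinearMap.range_comp,
      LinearMap.range_eq_top.mpr hsurj, Submodule.map_top]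
  have e3 : (Fin (k : ℕ) → Localization S) ≃ₗ[Localization S]
      LinearMap.range F'.mulVecLin :=
    (LinearEquiv.ofInjective Cm.mulVecLin hinj).trans (LinearEquiv.ofEq _ _ hrange2.symm)
  have e2 : (N.localized' (Localization S) S fpi) ≃ₗ[Localization S]
      LinearMap.range F'.mulVecLin := LinearEquiv.ofEq _ _ hrange
  exact ⟨(Pi.basisFun (Localization S) (Fin (k : ℕ))).map
    (e3.trans (e2.symm.trans e1B.symm))⟩

end Main


/-- **Theorem 3 (third part).** Let `F` be an idempotent `n × n` matrix over a commutative
ring `A`, `M ⊆ A^n` its image, and `r 0, …, r n` defined by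
`det(I + X • F) = ∑ i, r i • (1 + X) ^ i`.  If `t` is a principal `k × k` minor of `F`
and `s = r k * t`, then the localized module `M_s` is free of rank `k` over `A_s`. -/
theorem localization_at_idempotent_mul_principal_minor_free
    {A : Type*} [CommRing A] {n : ℕ}
    (F : Matrix (Fin n) (Fin n) A) (hF : F * F = F)
    (r : Fin (n + 1) → A)
    (hr : (1 + (Polynomial.X : A[X]) • F.map Polynomial.C).det
        = ∑ i : Fin (n + 1), Polynomial.C (r i) * (1 + Polynomial.X) ^ (i : ℕ))
    (k : Fin (n + 1)) (d : Fin (k : ℕ) → Fin n) (hd : Function.Injective d)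
    (t : A) (ht : t = (F.submatrix d d).det)
    (s : A) (hs : s = r k * t) :
    Nonempty (Module.Basis (Fin (k : ℕ)) (Localization (Submonoid.powers s))
      (LocalizedModule (Submonoid.powers s) (LinearMap.range F.mulVecLin))) := by
  exact aux_main_thm F hF r hr k d hd t ht s hs
end

section
/- Let A be a commutative ring and M an A-module. Then M is a finitely generated projective A-module if and only if there exist finitely many elements s_1, …, s_m of A with s_1·A + ⋯ + s_m·A = A such that for each i the localized module M_{s_i} is a finite free module over the localization A_{s_i}. -/
open Function

/-- If `M` is a finite module that is finitely presented after localizing at a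
spanning set, then `M` is finitely presented. -/
lemma Module.finitePresentation_of_localizationSpan_aux
    {A : Type*} [CommRing A] (M : Type*) [AddCommGroup M] [Module A M]
    [Module.Finite A M] (t : Set A) (ht : Ideal.span t = ⊤)
    (H : ∀ g : t, Module.FinitePresentation (Localization (Submonoid.powers g.1))
      (LocalizedModule (Submonoid.powers g.1) M)) :
    Module.FinitePresentation A M := by
  obtain ⟨n, l, hl⟩ := Module.Finite.exists_fin' A M
  have hker : Module.Finite A (LinearMap.ker l) := by
    refine Module.Finite.of_localizationSpan' t ht
      (Rₚ := fun g ↦ Localization (Submonoid.powers g.1))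
      (Mₚ := fun g ↦ (LinearMap.ker l).localized'
        (Localization (Submonoid.powers g.1)) (Submonoid.powers g.1)
        (LocalizedModule.mkLinearMap (Submonoid.powers g.1) (Fin n → A)))
      (fun g ↦ Submodule.toLocalized' _ _ _ _) (fun g ↦ ?_)
    set p := Submonoid.powers g.1
    have := H g
    rw [Module.Finite.iff_fg, LinearMap.localized'_ker_eq_ker_localizedMap
      (Localization p) p (LocalizedModule.mkLinearMap p (Fin n → A))
      (LocalizedModule.mkLinearMap p M)]
    have hsurj : Surjective ((IsLocalizedModule.map p
        (LocalizedModule.mkLinearMap p (Fin n → A))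
        (LocalizedModule.mkLinearMap p M) l).extendScalarsOfIsLocalization p
        (Localization p)) :=
      IsLocalizedModule.map_surjective p _ _ l hl
    exact Module.FinitePresentation.fg_ker _ hsurj
  exact Module.finitePresentation_of_surjective l hl (Module.Finite.iff_fg.mp hker)

/-- **Theorem 1.** A module `M` over a commutative ring `A` is finitely generated and
projective if and only if it is locally free: there exist finitely many comaximal
elements `s 1, …, s m` of `A` (generating the unit ideal) such that each localization
`M_{s i}` is a finite free module over `A_{s i}`. -/
theorem finite_projective_iff_exists_comaximal_localizations_free
    {A : Type*} [CommRing A] (M : Type*) [AddCommGroup M] [Module A M] :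
    (Module.Finite A M ∧ Module.Projective A M) ↔
      ∃ (m : ℕ) (s : Fin m → A),
        Ideal.span (Set.range s) = ⊤ ∧
        ∀ i : Fin m,
          Module.Finite (Localization (Submonoid.powers (s i)))
            (LocalizedModule (Submonoid.powers (s i)) M) ∧
          Module.Free (Localization (Submonoid.powers (s i)))
            (LocalizedModule (Submonoid.powers (s i)) M) := by
  constructor
  · rintro ⟨hfin, hproj⟩
    have hfp : Module.FinitePresentation A M :=
      Module.finitePresentation_of_projective A M
    -- The set of elements at which `M` localizes to a free module
    set T : Set A := {r : A | Module.Free (Localization (Submonoid.powers r))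
      (LocalizedModule (Submonoid.powers r) M)} with hT
    have key : ∀ (I : Ideal A), I.IsMaximal → ∃ r ∈ T, r ∉ I := by
      intro I hI
      have : Module.Projective (Localization.AtPrime I)
          (LocalizedModule I.primeCompl M) :=
        Module.projective_of_isLocalizedModule I.primeCompl
          (LocalizedModule.mkLinearMap I.primeCompl M)
      have : Module.Flat (Localization.AtPrime I)
          (LocalizedModule I.primeCompl M) := Module.Flat.of_projective
      have : Module.Free (Localization.AtPrime I)
          (LocalizedModule I.primeCompl M) :=
        Module.free_of_flat_of_isLocalRing
      obtain ⟨r, hr, hrfree, -⟩ :=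
        Module.FinitePresentation.exists_free_localizedModule_powers I.primeCompl
          (LocalizedModule.mkLinearMap I.primeCompl M) (Localization.AtPrime I)
      exact ⟨r, hrfree, hr⟩
    have hspan : Ideal.span T = ⊤ := by
      by_contra h
      obtain ⟨I, hI, hle⟩ := Ideal.exists_le_maximal _ h
      obtain ⟨r, hrT, hrI⟩ := key I hI
      exact hrI (hle (Ideal.subset_span hrT))
    have h1 : (1 : A) ∈ Ideal.span T := hspan ▸ Submodule.mem_top
    obtain ⟨t', ht'T, h1t'⟩ := Submodule.mem_span_finite_of_mem_span h1
    refine ⟨t'.card, fun i ↦ (t'.equivFin.symm i : A), ?_, fun i ↦ ?_⟩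
    · rw [eq_top_iff]
      rintro x -
      have hrange : (t' : Set A) ⊆ Set.range fun i ↦ (t'.equivFin.symm i : A) := by
        intro a ha
        exact ⟨t'.equivFin ⟨a, ha⟩, by simp⟩
      have : (1 : A) ∈ Ideal.span (Set.range fun i ↦ (t'.equivFin.symm i : A)) :=
        Ideal.span_mono hrange h1t'
      simpa using Ideal.mul_mem_left _ x this
    · have hmem : ((t'.equivFin.symm i : A)) ∈ T := ht'T (t'.equivFin.symm i).2
      refine ⟨?_, hmem⟩
      exact Module.Finite.of_isLocalizedModule
        (Submonoid.powers ((t'.equivFin.symm i : A)))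
        (LocalizedModule.mkLinearMap (Submonoid.powers ((t'.equivFin.symm i : A))) M)
  · rintro ⟨m, s, hspan, H⟩
    have hfin : Module.Finite A M := by
      refine Module.Finite.of_localizationSpan (Set.range s) hspan (fun g ↦ ?_)
      obtain ⟨x, hx⟩ := g
      obtain ⟨i, rfl⟩ := hx
      exact (H i).1
    have hfp : Module.FinitePresentation A M := by
      refine Module.finitePresentation_of_localizationSpan_aux M (Set.range s) hspan
        (fun g ↦ ?_)
      obtain ⟨x, hx⟩ := g
      obtain ⟨i, rfl⟩ := hx
      have h1 := (H i).1
      have h2 := (H i).2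
      exact Module.finitePresentation_of_projective _ _
    have hfree : Module.freeLocus A M = Set.univ := by
      rw [Set.eq_univ_iff_forall]
      intro p
      have : ¬ (Set.range s ⊆ p.asIdeal) := by
        intro h
        have := Ideal.span_le.mpr h
        rw [hspan, top_le_iff] at this
        exact p.isPrime.ne_top this
      obtain ⟨x, ⟨i, rfl⟩, hx⟩ : ∃ x ∈ Set.range s, x ∉ p.asIdeal := by
        simpa [Set.subset_def] using this
      have h2 := (H i).2
      have hproj : Module.Projective (Localization.Away (s i))
          (LocalizedModule (Submonoid.powers (s i)) M) := inferInstance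
      exact Module.basicOpen_subset_freeLocus_iff.mpr hproj hx
    exact ⟨hfin, Module.freeLocus_eq_univ_iff.mp hfree⟩
end

section
/- Let A be a commutative ring and M a finitely generated projective A-module generated by n elements. Then there exists a fundamental system of orthogonal idempotents r_0, r_1, …, r_n of A such that for each k with 0 ≤ k ≤ n and every prime ideal P of A with r_k ∉ P, the localization M_P is a free A_P-module of rank k. Moreover A is isomorphic as a ring to the product A_{r_0} × A_{r_1} × ⋯ × A_{r_n}, and M is isomorphic as an A-module to r_0·M ⊕ r_1·M ⊕ ⋯ ⊕ r_n·M. -/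
open DirectSum

section Aux
variable {A : Type*} [CommRing A]

lemma aux_isLocalization_quotient {e : A} (he : IsIdempotentElem e) :
    IsLocalization.Away e (A ⧸ Ideal.span {1 - e}) := by
  have hmk : algebraMap A (A ⧸ Ideal.span {1 - e}) e = 1 := by
    rw [← map_one (algebraMap A (A ⧸ Ideal.span {1 - e}))]
    show Ideal.Quotient.mk _ e = Ideal.Quotient.mk _ 1
    rw [Ideal.Quotient.mk_eq_mk_iff_sub_mem]
    have : e - 1 = -(1 - e) := by ring
    rw [this]
    exact neg_mem (Ideal.subset_span rfl)
  refine ⟨?_, ?_, ?_⟩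
  · rintro ⟨y, m, rfl⟩
    simp only [map_pow, hmk, one_pow]
    exact isUnit_one
  · intro z
    obtain ⟨a, rfl⟩ := Ideal.Quotient.mk_surjective z
    exact ⟨⟨a, 1⟩, by simp⟩
  · intro x y h
    refine ⟨⟨e, Submonoid.mem_powers e⟩, ?_⟩
    have hxy : x - y ∈ Ideal.span {1 - e} := by
      rwa [← Ideal.Quotient.mk_eq_mk_iff_sub_mem]
    obtain ⟨c, hc⟩ := Ideal.mem_span_singleton'.mp hxy
    have : e * (x - y) = c * (e - e * e) := by
      rw [← hc]; ring
    rw [he.eq, sub_self, mul_zero] at this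
    simpa [mul_sub, sub_eq_zero] using this

lemma aux_idem_eq_zero_of_nilpotent {e : A} (he : IsIdempotentElem e)
    (hn : IsNilpotent e) : e = 0 := by
  obtain ⟨m, hm⟩ := hn
  rcases Nat.eq_zero_or_pos m with h | h
  · subst h
    simp only [pow_zero] at hm
    calc e = 1 * e := (one_mul e).symm
    _ = 0 := by rw [hm, zero_mul]
  · obtain ⟨m', rfl⟩ := Nat.exists_eq_succ_of_ne_zero h.ne'
    rw [← he.pow_succ_eq m', hm]

end Aux

/-- **Theorem 2.** If `M` is a finitely generated projective module over a commutative
ring `A`, generated by `n` elements, then there is a fundamental system of orthogonal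
idempotents `r 0, …, r n` of `A` such that for each `k`, the module `M` becomes free of
rank `k` after localization at any prime avoiding `r k`; moreover `A` is isomorphic to
the product of the localizations `A_{r k}` and `M` to the direct sum of the
submodules `r k • M`. -/
theorem exists_fundamental_system_of_orthogonal_idempotents_rank_decomposition
    {A : Type*} [CommRing A] (M : Type*) [AddCommGroup M] [Module A M]
    [Module.Projective A M] {n : ℕ} (g : Fin n → M)
    (hg : Submodule.span A (Set.range g) = ⊤) :
    ∃ r : Fin (n + 1) → A,
      (∑ k : Fin (n + 1), r k) = 1 ∧
      (∀ k l : Fin (n + 1), k ≠ l → r k * r l = 0) ∧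
      (∀ (k : Fin (n + 1)) (P : Ideal A) (hP : P.IsPrime), r k ∉ P →
        Nonempty (Module.Basis (Fin (k : ℕ)) (Localization.AtPrime P)
          (LocalizedModule P.primeCompl M))) ∧
      Nonempty (A ≃+* ∀ k : Fin (n + 1), Localization (Submonoid.powers (r k))) ∧
      Nonempty (M ≃ₗ[A]
        ⨁ k : Fin (n + 1), LinearMap.range (LinearMap.lsmul A M (r k))) := by
  classical
  have hfin : Module.Finite A M := ⟨hg ▸ Submodule.fg_span (Set.finite_range g)⟩
  haveI hfp : Module.FinitePresentation A M := Module.finitePresentation_of_projective A M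
  -- every localization at a prime is free
  have hfree : ∀ p : PrimeSpectrum A,
      Module.Free (Localization.AtPrime p.asIdeal) (LocalizedModule p.asIdeal.primeCompl M) := by
    intro p
    have := Module.freeLocus_eq_univ (R := A) (M := M)
    exact Module.mem_freeLocus.mp (by rw [this]; trivial)
  -- the rank at every prime is at most n
  have hrank_le : ∀ p : PrimeSpectrum A, Module.rankAtStalk M p ≤ n := by
    intro p
    have hsp := span_eq_top_of_isLocalizedModule (Localization.AtPrime p.asIdeal)
      p.asIdeal.primeCompl (LocalizedModule.mkLinearMap p.asIdeal.primeCompl M) hg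
    rw [← Set.range_comp] at hsp
    have := finrank_le_of_span_eq_top hsp
    simpa [Module.rankAtStalk] using this
  -- locally constant rank gives clopen fibers, hence idempotents
  have hlc := Module.isLocallyConstant_rankAtStalk (R := A) (M := M)
  have H : ∀ k : Fin (n + 1), ∃ e : A, IsIdempotentElem e ∧
      (Module.rankAtStalk (R := A) M ⁻¹' {(k : ℕ)}) = ↑(PrimeSpectrum.basicOpen e) :=
    fun k => PrimeSpectrum.exists_idempotent_basicOpen_eq_of_isClopen (hlc.isClopen_fiber _)
  choose r hidem hbo using H
  have hmem : ∀ (k : Fin (n + 1)) (p : PrimeSpectrum A),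
      Module.rankAtStalk M p = (k : ℕ) ↔ r k ∉ p.asIdeal := by
    intro k p
    constructor
    · intro h
      have : p ∈ (Module.rankAtStalk (R := A) M ⁻¹' {(k : ℕ)}) := h
      rw [hbo k] at this
      exact this
    · intro h
      have : p ∈ (↑(PrimeSpectrum.basicOpen (r k)) : Set (PrimeSpectrum A)) := h
      rw [← hbo k] at this
      exact this
  -- orthogonality
  have hortho : ∀ k l : Fin (n + 1), k ≠ l → r k * r l = 0 := by
    intro k l hkl
    apply aux_idem_eq_zero_of_nilpotent ((hidem k).mul_of_commute (Commute.all _ _) (hidem l))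
    rw [← PrimeSpectrum.basicOpen_eq_bot_iff, PrimeSpectrum.basicOpen_mul]
    rw [eq_bot_iff]
    rintro p ⟨h1, h2⟩
    have e1 : Module.rankAtStalk M p = (k : ℕ) := (hmem k p).mpr h1
    have e2 : Module.rankAtStalk M p = (l : ℕ) := (hmem l p).mpr h2
    exact hkl (Fin.ext (e1 ▸ e2))
  have hOI : OrthogonalIdempotents r := ⟨hidem, hortho⟩
  -- completeness
  have hsum : (∑ k : Fin (n + 1), r k) = 1 := by
    have hnil : IsNilpotent (1 - ∑ k : Fin (n + 1), r k) := by
      rw [← PrimeSpectrum.basicOpen_eq_bot_iff, eq_bot_iff]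
      intro p hp
      exfalso
      set k : Fin (n + 1) := ⟨Module.rankAtStalk M p, Nat.lt_succ_of_le (hrank_le p)⟩
      have hrk : r k ∉ p.asIdeal := (hmem k p).mp rfl
      have hps : (1 - ∑ j : Fin (n + 1), r j) * r k = 0 := by
        rw [sub_mul, one_mul, Finset.sum_mul]
        rw [Finset.sum_eq_single k]
        · rw [(hidem k).eq, sub_self]
        · intro j _ hj; exact hortho j k hj
        · intro h; exact absurd (Finset.mem_univ k) h
      have h0 : (1 - ∑ j : Fin (n + 1), r j) * r k ∈ p.asIdeal := by
        rw [hps]; exact p.asIdeal.zero_mem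
      rcases p.isPrime.mem_or_mem h0 with h | h
      · exact hp h
      · exact hrk h
    have := aux_idem_eq_zero_of_nilpotent hOI.isIdempotentElem_sum.one_sub hnil
    linear_combination -this
  have hCOI : CompleteOrthogonalIdempotents r := ⟨hOI, hsum⟩
  refine ⟨r, hsum, hortho, ?_, ?_, ?_⟩
  · -- freeness of correct rank
    intro k P hP hr
    have hrk : Module.rankAtStalk M ⟨P, hP⟩ = (k : ℕ) := (hmem k ⟨P, hP⟩).mpr hr
    haveI : Module.Free (Localization.AtPrime P) (LocalizedModule P.primeCompl M) :=
      hfree ⟨P, hP⟩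
    have hfr : Module.finrank (Localization.AtPrime P) (LocalizedModule P.primeCompl M)
        = (k : ℕ) := hrk
    exact ⟨Module.finBasisOfFinrankEq _ _ hfr⟩
  · -- ring isomorphism
    have e1 : A ≃+* ∀ k : Fin (n + 1), A ⧸ Ideal.span {1 - r k} :=
      RingEquiv.ofBijective _ hCOI.bijective_pi
    have e2 : ∀ k : Fin (n + 1),
        Localization (Submonoid.powers (r k)) ≃+* A ⧸ Ideal.span {1 - r k} := by
      intro k
      have := aux_isLocalization_quotient (hidem k)
      exact (IsLocalization.algEquiv (Submonoid.powers (r k))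
        (Localization (Submonoid.powers (r k))) (A ⧸ Ideal.span {1 - r k})).toRingEquiv
    exact ⟨e1.trans (RingEquiv.piCongrRight fun k => (e2 k).symm)⟩
  · -- module decomposition
    set N : Fin (n + 1) → Submodule A M := fun k => LinearMap.range (LinearMap.lsmul A M (r k))
    let f : M →ₗ[A] ⨁ k, N k :=
      ∑ k : Fin (n + 1), (DirectSum.lof A (Fin (n + 1)) (fun k => N k) k) ∘ₗ
        (LinearMap.lsmul A M (r k)).rangeRestrict
    let q : (⨁ k, N k) →ₗ[A] M := DirectSum.toModule A (Fin (n + 1)) M fun k => (N k).subtype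
    have hqf : q.comp f = LinearMap.id := by
      ext m
      simp only [LinearMap.comp_apply, LinearMap.id_apply, LinearMap.sum_apply, map_sum, f, q]
      have : ∀ k : Fin (n + 1), (DirectSum.toModule A (Fin (n + 1)) M fun k => (N k).subtype)
          ((DirectSum.lof A (Fin (n + 1)) (fun k => N k) k)
            ((LinearMap.lsmul A M (r k)).rangeRestrict m)) = r k • m := by
        intro k
        rw [DirectSum.toModule_lof]
        rfl
      rw [Finset.sum_congr rfl fun k _ => this k, ← Finset.sum_smul, hsum, one_smul]
    have hfq : f.comp q = LinearMap.id := by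
      refine DirectSum.linearMap_ext _ fun k => ?_
      ext x
      simp only [LinearMap.comp_apply, LinearMap.id_apply, LinearMap.sum_apply, f, q,
        DirectSum.toModule_lof, Submodule.subtype_apply]
      obtain ⟨x, hx⟩ := x
      obtain ⟨m, rfl⟩ := hx
      rw [Finset.sum_eq_single k]
      · congr 1
        apply Subtype.ext
        congr 3
        apply Subtype.ext
        show r k • (r k) • m = (r k) • m
        rw [smul_smul, (hidem k).eq]
      · intro l _ hlk
        have : (LinearMap.lsmul A M (r l)).rangeRestrict ((LinearMap.lsmul A M (r k)) m) = 0 := by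
          apply Subtype.ext
          show r l • (r k) • m = (0 : M)
          rw [smul_smul, hortho l k hlk, zero_smul]
        rw [this, map_zero]
      · intro h; exact absurd (Finset.mem_univ k) h
    exact ⟨LinearEquiv.ofLinear f q hfq hqf⟩
end

section
/- Let A be a commutative ring and G a q×m matrix over A. Suppose G has a k×k submatrix whose determinant is invertible in A and that all (k+1)×(k+1) minors of G are zero. Then G is equivalent to the canonical matrix I_{k,q,m} (i.e., there exist an invertible q×q matrix P and an invertible m×m matrix Q over A with P·G·Q = I_{k,q,m}). Consequently the cokernel of G is a free A-module of rank q−k, the image of G is a free A-module of rank k admitting a free complement in A^q, and the kernel of G is a free A-module of rank m−k admitting a free complement in A^m. -/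
open Matrix

/-- The canonical `q × m` matrix with the identity `I_k` in the upper left corner and
zeros elsewhere. -/
def stdBlockMatrix {A : Type*} [CommRing A] (k q m : ℕ) : Matrix (Fin q) (Fin m) A :=
  Matrix.of fun i j => if (i : ℕ) = (j : ℕ) ∧ (i : ℕ) < k then 1 else 0

namespace FreenessAux

/-- Any injective map `Fin k → Fin n` extends to an equivalence
`Fin k ⊕ Fin (n - k) ≃ Fin n`. -/
lemma exists_sumEquiv {k n : ℕ} (f : Fin k → Fin n) (hf : Function.Injective f) :
    ∃ e : Fin k ⊕ Fin (n - k) ≃ Fin n, ∀ i, e (Sum.inl i) = f i := by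
  classical
  have hk : k ≤ n := by simpa using Fintype.card_le_of_injective f hf
  let e₁ : Fin k ≃ Set.range f := Equiv.ofInjective f hf
  have hcard : Fintype.card ((Set.range f)ᶜ : Set (Fin n)) = n - k := by
    rw [Fintype.card_compl_set]
    simp [Set.card_range_of_injective hf]
  let e₂ : Fin (n - k) ≃ ((Set.range f)ᶜ : Set (Fin n)) :=
    (Fintype.equivFinOfCardEq hcard).symm
  exact ⟨(Equiv.sumCongr e₁ e₂).trans (Equiv.Set.sumCompl (Set.range f)),
    fun i => by simp [e₁]⟩

variable {A : Type*} [CommRing A]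

/-- Vectors supported on coordinates `< k`. -/
def loS (A : Type*) [CommRing A] (n k : ℕ) : Submodule A (Fin n → A) where
  carrier := {v | ∀ i : Fin n, k ≤ (i : ℕ) → v i = 0}
  add_mem' := fun {a b} ha hb i hi => by simp [ha i hi, hb i hi]
  zero_mem' := fun i _ => rfl
  smul_mem' := fun c {v} hv i hi => by simp [hv i hi]

/-- Vectors supported on coordinates `≥ k`. -/
def hiS (A : Type*) [CommRing A] (n k : ℕ) : Submodule A (Fin n → A) where
  carrier := {v | ∀ i : Fin n, (i : ℕ) < k → v i = 0}
  add_mem' := fun {a b} ha hb i hi => by simp [ha i hi, hb i hi]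
  zero_mem' := fun i _ => rfl
  smul_mem' := fun c {v} hv i hi => by simp [hv i hi]

lemma mem_loS {n k : ℕ} {v : Fin n → A} :
    v ∈ loS A n k ↔ ∀ i : Fin n, k ≤ (i : ℕ) → v i = 0 := Iff.rfl

lemma mem_hiS {n k : ℕ} {v : Fin n → A} :
    v ∈ hiS A n k ↔ ∀ i : Fin n, (i : ℕ) < k → v i = 0 := Iff.rfl

lemma isCompl_loS_hiS (n k : ℕ) : IsCompl (loS A n k) (hiS A n k) := by
  constructor
  · rw [Submodule.disjoint_def]
    intro v h1 h2
    funext i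
    rcases lt_or_ge (i : ℕ) k with h | h
    · exact h2 i h
    · exact h1 i h
  · rw [codisjoint_iff, eq_top_iff]
    intro v _
    rw [Submodule.mem_sup]
    refine ⟨fun i => if (i : ℕ) < k then v i else 0,
      fun i hi => if_neg (Nat.not_lt.mpr hi),
      fun i => if (i : ℕ) < k then 0 else v i,
      fun i hi => if_pos hi, ?_⟩
    funext i
    by_cases h : (i : ℕ) < k <;> simp [h]

/-- The "low support" submodule is free on `Fin k`. -/
def loEquiv {n k : ℕ} (hkn : k ≤ n) : loS A n k ≃ₗ[A] (Fin k → A) where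
  toFun v a := v.1 ⟨a, a.2.trans_le hkn⟩
  map_add' _ _ := rfl
  map_smul' _ _ := rfl
  invFun y := ⟨fun i => if h : (i : ℕ) < k then y ⟨i, h⟩ else 0,
    fun i hi => dif_neg (Nat.not_lt.mpr hi)⟩
  left_inv v := Subtype.ext (funext fun i => by
    dsimp only
    by_cases h : (i : ℕ) < k
    · rw [dif_pos h]
    · rw [dif_neg h]; exact (v.2 i (Nat.not_lt.mp h)).symm)
  right_inv y := funext fun a => by
    dsimp only
    rw [dif_pos a.2]

/-- The "high support" submodule is free on `Fin (n - k)`. -/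
def hiEquiv {n k : ℕ} (hkn : k ≤ n) : hiS A n k ≃ₗ[A] (Fin (n - k) → A) where
  toFun v b := v.1 ⟨k + b, by have := b.2; omega⟩
  map_add' _ _ := rfl
  map_smul' _ _ := rfl
  invFun y := ⟨fun i => if h : k ≤ (i : ℕ) then y ⟨(i : ℕ) - k, by have := i.2; omega⟩ else 0,
    fun i hi => dif_neg (by omega)⟩
  left_inv v := Subtype.ext (funext fun i => by
    dsimp only
    by_cases h : k ≤ (i : ℕ)
    · rw [dif_pos h]
      exact congrArg v.1 (Fin.ext (by simp; omega))
    · rw [dif_neg h]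
      exact (v.2 i (by omega)).symm)
  right_inv y := funext fun b => by
    dsimp only
    rw [dif_pos (Nat.le_add_right k b)]
    exact congrArg y (Fin.ext (by simp))

/-- Projection to the coordinates `≥ k`. -/
def projHi {n k : ℕ} (hkn : k ≤ n) : (Fin n → A) →ₗ[A] (Fin (n - k) → A) where
  toFun v b := v ⟨k + b, by have := b.2; omega⟩
  map_add' _ _ := rfl
  map_smul' _ _ := rfl

lemma projHi_surjective {n k : ℕ} (hkn : k ≤ n) :
    Function.Surjective (projHi (A := A) hkn) := by
  intro y
  refine ⟨fun i => if h : k ≤ (i : ℕ) then y ⟨(i : ℕ) - k, by have := i.2; omega⟩ else 0,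
    funext fun b => ?_⟩
  show (if h : k ≤ ((⟨k + b, _⟩ : Fin n) : ℕ) then _ else 0) = y b
  rw [dif_pos (Nat.le_add_right k b)]
  exact congrArg y (Fin.ext (by simp))

lemma ker_projHi {n k : ℕ} (hkn : k ≤ n) :
    LinearMap.ker (projHi (A := A) hkn) = loS A n k := by
  ext v
  simp only [LinearMap.mem_ker, mem_loS]
  constructor
  · intro hv i hi
    have h1 := congrFun hv ⟨(i : ℕ) - k, by have := i.2; omega⟩
    have h2 : (⟨k + ((i : ℕ) - k), by have := i.2; omega⟩ : Fin n) = i := Fin.ext (by simp; omega)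
    calc v i = v ⟨k + ((i : ℕ) - k), by have := i.2; omega⟩ := (congrArg v h2).symm
      _ = 0 := h1
  · intro hv
    funext b
    exact hv _ (Nat.le_add_right _ _)

/-- Quotient by the "low support" submodule is free on `Fin (n - k)`. -/
noncomputable def quotLoEquiv {n k : ℕ} (hkn : k ≤ n) :
    ((Fin n → A) ⧸ loS A n k) ≃ₗ[A] (Fin (n - k) → A) :=
  (Submodule.quotEquivOfEq _ _ (ker_projHi hkn).symm).trans
    ((projHi hkn).quotKerEquivOfSurjective (projHi_surjective hkn))

lemma stdBlockMatrix_mulVec {k q m : ℕ} (hkm : k ≤ m) (x : Fin m → A) (i : Fin q) :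
    (stdBlockMatrix k q m).mulVec x i
      = if h : (i : ℕ) < k then x ⟨i, h.trans_le hkm⟩ else 0 := by
  classical
  simp only [Matrix.mulVec, dotProduct, stdBlockMatrix, Matrix.of_apply]
  split_ifs with h
  · rw [Finset.sum_eq_single (⟨(i : ℕ), h.trans_le hkm⟩ : Fin m)]
    · simp [h]
    · intro j _ hj
      rw [if_neg, zero_mul]
      rintro ⟨h1, -⟩
      exact hj (Fin.ext (by simp [← h1]))
    · intro hmem
      exact absurd (Finset.mem_univ _) hmem
  · apply Finset.sum_eq_zero
    intro j _
    rw [if_neg, zero_mul]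
    exact fun hc => h hc.2

lemma range_std {k q m : ℕ} (hkm : k ≤ m) :
    LinearMap.range (stdBlockMatrix (A := A) k q m).mulVecLin = loS A q k := by
  ext v
  constructor
  · rintro ⟨x, rfl⟩
    intro i hi
    rw [Matrix.mulVecLin_apply, stdBlockMatrix_mulVec hkm, dif_neg (Nat.not_lt.mpr hi)]
  · intro hv
    refine ⟨fun j => if h : (j : ℕ) < q then v ⟨j, h⟩ else 0, funext fun i => ?_⟩
    rw [Matrix.mulVecLin_apply, stdBlockMatrix_mulVec hkm]
    split_ifs with h h2
    · exact congrArg v (Fin.ext rfl)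
    · exact absurd i.isLt h2
    · exact (hv i (Nat.not_lt.mp h)).symm

lemma ker_std {k q m : ℕ} (hkq : k ≤ q) (hkm : k ≤ m) :
    LinearMap.ker (stdBlockMatrix (A := A) k q m).mulVecLin = hiS A m k := by
  ext x
  simp only [LinearMap.mem_ker, mem_hiS]
  constructor
  · intro hx j hj
    have h1 := congrFun hx ⟨(j : ℕ), lt_of_lt_of_le hj hkq⟩
    rw [Matrix.mulVecLin_apply, stdBlockMatrix_mulVec hkm] at h1
    rw [dif_pos (show ((⟨(j : ℕ), lt_of_lt_of_le hj hkq⟩ : Fin q) : ℕ) < k from hj)] at h1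
    exact h1
  · intro hx
    funext i
    rw [Matrix.mulVecLin_apply, stdBlockMatrix_mulVec hkm]
    split_ifs with h
    · exact hx _ h
    · rfl

lemma isCompl_map {M M' : Type*} [AddCommGroup M] [Module A M] [AddCommGroup M'] [Module A M']
    (e : M ≃ₗ[A] M') {p p' : Submodule A M} (h : IsCompl p p') :
    IsCompl (p.map (e : M →ₗ[A] M')) (p'.map (e : M →ₗ[A] M')) := by
  constructor
  · rw [Submodule.disjoint_def]
    intro x hx1 hx2
    obtain ⟨y, hy, rfl⟩ := Submodule.mem_map.mp hx1
    obtain ⟨z, hz, hzy⟩ := Submodule.mem_map.mp hx2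
    have hzy' : z = y := e.injective hzy
    subst hzy'
    rw [Submodule.disjoint_def.mp h.1 z hy hz, map_zero]
  · rw [codisjoint_iff, eq_top_iff]
    intro x _
    obtain ⟨y, rfl⟩ := e.surjective x
    have hy : y ∈ p ⊔ p' := by rw [codisjoint_iff.mp h.2]; trivial
    obtain ⟨a, ha, b, hb, rfl⟩ := Submodule.mem_sup.mp hy
    rw [map_add]
    exact Submodule.add_mem_sup (Submodule.mem_map_of_mem ha) (Submodule.mem_map_of_mem hb)

end FreenessAux

open FreenessAux

/-- **Freeness lemma.** If a `q × m` matrix `G` over a commutative ring `A` has an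
invertible `k × k` minor while all its `(k+1) × (k+1)` minors vanish, then `G` is
equivalent to the canonical matrix `I_{k,q,m}`; consequently its cokernel is free of
rank `q - k`, its image is free of rank `k` with a free complement in `A^q`, and its
kernel is free of rank `m - k` with a free complement in `A^m`. -/
theorem matrix_equiv_stdBlockMatrix_of_isUnit_minor_of_minors_eq_zero
    {A : Type*} [CommRing A] {q m k : ℕ} (G : Matrix (Fin q) (Fin m) A)
    (ri : Fin k → Fin q) (ci : Fin k → Fin m)
    (hri : Function.Injective ri) (hci : Function.Injective ci)
    (hunit : IsUnit (G.submatrix ri ci).det)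
    (hminors : ∀ (ri' : Fin (k + 1) → Fin q) (ci' : Fin (k + 1) → Fin m),
      Function.Injective ri' → Function.Injective ci' →
      (G.submatrix ri' ci').det = 0) :
    (∃ (P : Matrix (Fin q) (Fin q) A) (Q : Matrix (Fin m) (Fin m) A),
        IsUnit P.det ∧ IsUnit Q.det ∧ P * G * Q = stdBlockMatrix k q m) ∧
    Nonempty (Module.Basis (Fin (q - k)) A ((Fin q → A) ⧸ LinearMap.range G.mulVecLin)) ∧
    (Nonempty (Module.Basis (Fin k) A (LinearMap.range G.mulVecLin)) ∧
      ∃ N : Submodule A (Fin q → A),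
        IsCompl (LinearMap.range G.mulVecLin) N ∧ Module.Free A N) ∧
    (Nonempty (Module.Basis (Fin (m - k)) A (LinearMap.ker G.mulVecLin)) ∧
      ∃ N : Submodule A (Fin m → A),
        IsCompl (LinearMap.ker G.mulVecLin) N ∧ Module.Free A N) := by
  classical
  have hkq : k ≤ q := by simpa using Fintype.card_le_of_injective ri hri
  have hkm : k ≤ m := by simpa using Fintype.card_le_of_injective ci hci
  obtain ⟨eQ, heQ⟩ := exists_sumEquiv ri hri
  obtain ⟨eM, heM⟩ := exists_sumEquiv ci hci
  -- Step 1: the equivalence with the standard block matrix.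
  have main : ∃ (P : Matrix (Fin q) (Fin q) A) (Q : Matrix (Fin m) (Fin m) A),
      IsUnit P.det ∧ IsUnit Q.det ∧ P * G * Q = stdBlockMatrix k q m := by
    set M : Matrix (Fin k ⊕ Fin (q - k)) (Fin k ⊕ Fin (m - k)) A := G.submatrix eQ eM with hMdef
    set B := M.toBlocks₁₁ with hB
    set C := M.toBlocks₁₂ with hC
    set D := M.toBlocks₂₁ with hD
    set E := M.toBlocks₂₂ with hE
    have hBG : B = G.submatrix ri ci := by
      ext a b
      simp [hB, Matrix.toBlocks₁₁, hMdef, heQ, heM]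
    have hBunit : IsUnit B.det := by rw [hBG]; exact hunit
    have : Invertible B := Matrix.invertibleOfIsUnitDet _ hBunit
    -- the Schur complement vanishes
    have hS : E - D * ⅟B * C = 0 := by
      ext i j
      set c : Matrix (Fin k) (Fin 1) A := Matrix.of fun a _ => C a j with hc
      set d : Matrix (Fin 1) (Fin k) A := Matrix.of fun _ b => D i b with hd
      set e : Matrix (Fin 1) (Fin 1) A := Matrix.of fun _ _ => E i j with he
      set rE : Fin k ⊕ Fin 1 → Fin q := Sum.elim ri (fun _ => eQ (Sum.inr i)) with hrE
      set cE : Fin k ⊕ Fin 1 → Fin m := Sum.elim ci (fun _ => eM (Sum.inr j)) with hcE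
      have hrEinj : Function.Injective rE := by
        rintro (s | s) (t | t) h
        · exact congrArg Sum.inl (hri h)
        · exfalso
          simp only [hrE, Sum.elim_inl, Sum.elim_inr, ← heQ] at h
          exact Sum.inl_ne_inr (eQ.injective h)
        · exfalso
          simp only [hrE, Sum.elim_inl, Sum.elim_inr, ← heQ] at h
          exact Sum.inr_ne_inl (eQ.injective h)
        · exact congrArg Sum.inr (Subsingleton.elim s t)
      have hcEinj : Function.Injective cE := by
        rintro (s | s) (t | t) h
        · exact congrArg Sum.inl (hci h)
        · exfalso
          simp only [hcE, Sum.elim_inl, Sum.elim_inr, ← heM] at h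
          exact Sum.inl_ne_inr (eM.injective h)
        · exfalso
          simp only [hcE, Sum.elim_inl, Sum.elim_inr, ← heM] at h
          exact Sum.inr_ne_inl (eM.injective h)
        · exact congrArg Sum.inr (Subsingleton.elim s t)
      have h0 : (G.submatrix (rE ∘ finSumFinEquiv.symm) (cE ∘ finSumFinEquiv.symm)).det = 0 :=
        hminors _ _ (hrEinj.comp finSumFinEquiv.symm.injective)
          (hcEinj.comp finSumFinEquiv.symm.injective)
      rw [← Matrix.submatrix_submatrix, Matrix.det_submatrix_equiv_self] at h0
      have hblocks : G.submatrix rE cE = Matrix.fromBlocks B c d e := by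
        ext (s | s) (t | t) <;>
          simp [hrE, hcE, hc, hd, he, hB, hC, hD, hE, Matrix.toBlocks₁₁, Matrix.toBlocks₁₂,
            Matrix.toBlocks₂₁, Matrix.toBlocks₂₂, hMdef, heQ, heM]
      rw [hblocks, Matrix.det_fromBlocks₁₁] at h0
      have h1 : Matrix.det (e - d * ⅟B * c) = (E - D * ⅟B * C) i j := by
        rw [Matrix.det_unique]
        simp [hc, hd, he, Matrix.sub_apply, Matrix.mul_apply, Finset.sum_mul, Finset.mul_sum]
      rw [h1] at h0
      have := (hBunit.mul_right_eq_zero).mp h0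
      simpa using this
    set P' : Matrix (Fin k ⊕ Fin (q - k)) (Fin k ⊕ Fin (q - k)) A :=
      Matrix.fromBlocks (⅟B) 0 (-(D * ⅟B)) 1 with hP'
    set Q' : Matrix (Fin k ⊕ Fin (m - k)) (Fin k ⊕ Fin (m - k)) A :=
      Matrix.fromBlocks 1 (-(⅟B * C)) 0 1 with hQ'
    have hPMQ : P' * M * Q' = Matrix.fromBlocks 1 0 0 0 := by
      have hM' : M = Matrix.fromBlocks B C D E := (Matrix.fromBlocks_toBlocks M).symm
      have hE' : E = D * (⅟B * C) := by
        rw [← Matrix.mul_assoc]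
        exact sub_eq_zero.mp hS
      rw [hM', hP', hQ', Matrix.fromBlocks_multiply, Matrix.fromBlocks_multiply]
      simp [Matrix.mul_assoc, hE']
    have hdetP' : IsUnit P'.det := by
      rw [hP', Matrix.det_fromBlocks_zero₁₂, Matrix.det_one, mul_one]
      exact Matrix.isUnit_det_of_left_inverse (mul_invOf_self B)
    have hdetQ' : IsUnit Q'.det := by
      rw [hQ', Matrix.det_fromBlocks_zero₂₁, Matrix.det_one, one_mul, Matrix.det_one]
      exact isUnit_one
    have hq' : k + (q - k) = q := Nat.add_sub_cancel' hkq
    have hm' : k + (m - k) = m := Nat.add_sub_cancel' hkm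
    set fq : Fin k ⊕ Fin (q - k) ≃ Fin q := finSumFinEquiv.trans (finCongr hq') with hfq
    set fm : Fin k ⊕ Fin (m - k) ≃ Fin m := finSumFinEquiv.trans (finCongr hm') with hfm
    have hfqval : ∀ a : Fin k, ((fq (Sum.inl a) : ℕ)) = a := by
      intro a; simp [hfq]
    have hfqval' : ∀ b : Fin (q - k), ((fq (Sum.inr b) : ℕ)) = k + b := by
      intro b; simp [hfq]
    have hfmval : ∀ a : Fin k, ((fm (Sum.inl a) : ℕ)) = a := by
      intro a; simp [hfm]
    have hfmval' : ∀ b : Fin (m - k), ((fm (Sum.inr b) : ℕ)) = k + b := by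
      intro b; simp [hfm]
    set P : Matrix (Fin q) (Fin q) A := P'.submatrix fq.symm eQ.symm with hP
    set Q : Matrix (Fin m) (Fin m) A := Q'.submatrix eM.symm fm.symm with hQ
    have hG : G = M.submatrix eQ.symm eM.symm := by
      rw [hMdef, Matrix.submatrix_submatrix]
      simp
    have hPGQ : P * G * Q = (Matrix.fromBlocks 1 0 0 0 :
        Matrix (Fin k ⊕ Fin (q - k)) (Fin k ⊕ Fin (m - k)) A).submatrix fq.symm fm.symm := by
      rw [hG, hP, hQ, Matrix.submatrix_mul_equiv P' M _ eQ.symm _,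
        Matrix.submatrix_mul_equiv (P' * M) Q' _ eM.symm _, hPMQ]
    have hstd : (Matrix.fromBlocks 1 0 0 0 :
        Matrix (Fin k ⊕ Fin (q - k)) (Fin k ⊕ Fin (m - k)) A).submatrix fq.symm fm.symm
        = stdBlockMatrix k q m := by
      ext i j
      have hi : i = fq (fq.symm i) := (fq.apply_symm_apply i).symm
      have hj : j = fm (fm.symm j) := (fm.apply_symm_apply j).symm
      rw [Matrix.submatrix_apply]
      conv_rhs => rw [hi, hj]
      rcases hs : fq.symm i with a | a <;> rcases ht : fm.symm j with b | b
      · simp only [Matrix.fromBlocks_apply₁₁, stdBlockMatrix, Matrix.of_apply,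
          hfqval, hfmval, Matrix.one_apply]
        by_cases hab : a = b
        · subst hab; simp [a.2]
        · rw [if_neg hab, if_neg]
          rintro ⟨h1, -⟩
          exact hab (Fin.ext h1)
      · simp only [Matrix.fromBlocks_apply₁₂, stdBlockMatrix, Matrix.of_apply,
          hfqval, hfmval', Matrix.zero_apply]
        rw [if_neg]
        rintro ⟨h1, h2⟩
        omega
      · simp only [Matrix.fromBlocks_apply₂₁, stdBlockMatrix, Matrix.of_apply,
          hfqval', hfmval, Matrix.zero_apply]
        rw [if_neg]
        rintro ⟨h1, h2⟩
        omega
      · simp only [Matrix.fromBlocks_apply₂₂, stdBlockMatrix, Matrix.of_apply,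
          hfqval', hfmval', Matrix.zero_apply]
        rw [if_neg]
        rintro ⟨h1, h2⟩
        omega
    refine ⟨P, Q, ?_, ?_, by rw [hPGQ, hstd]⟩
    · have : Invertible P' := Matrix.invertibleOfIsUnitDet _ hdetP'
      apply Matrix.isUnit_det_of_right_inverse (B := (⅟P').submatrix eQ.symm fq.symm)
      rw [hP, Matrix.submatrix_mul_equiv P' (⅟P') _ eQ.symm _, mul_invOf_self,
        Matrix.submatrix_one_equiv]
    · have : Invertible Q' := Matrix.invertibleOfIsUnitDet _ hdetQ'
      apply Matrix.isUnit_det_of_right_inverse (B := (⅟Q').submatrix fm.symm eM.symm)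
      rw [hQ, Matrix.submatrix_mul_equiv Q' (⅟Q') _ fm.symm _, mul_invOf_self,
        Matrix.submatrix_one_equiv]
  -- Step 2: the consequences.
  obtain ⟨P, Q, hPdet, hQdet, hPGQ⟩ := main
  have : Invertible P := Matrix.invertibleOfIsUnitDet _ hPdet
  have : Invertible Q := Matrix.invertibleOfIsUnitDet _ hQdet
  have hG2 : G = ⅟P * stdBlockMatrix (A := A) k q m * ⅟Q := by
    have h1 : ⅟P * (P * G * Q) * ⅟Q = G := by
      rw [← Matrix.mul_assoc, ← Matrix.mul_assoc, invOf_mul_self, Matrix.one_mul,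
        Matrix.mul_assoc, mul_invOf_self, Matrix.mul_one]
    rw [← hPGQ, h1]
  -- linear equivalences induced by `⅟P` and `⅟Q`
  set eP : (Fin q → A) ≃ₗ[A] (Fin q → A) := LinearEquiv.ofLinear (⅟P).mulVecLin P.mulVecLin
    (by rw [← Matrix.mulVecLin_mul, invOf_mul_self, Matrix.mulVecLin_one])
    (by rw [← Matrix.mulVecLin_mul, mul_invOf_self, Matrix.mulVecLin_one]) with heP
  set eQ2 : (Fin m → A) ≃ₗ[A] (Fin m → A) := LinearEquiv.ofLinear (⅟Q).mulVecLin Q.mulVecLin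
    (by rw [← Matrix.mulVecLin_mul, invOf_mul_self, Matrix.mulVecLin_one])
    (by rw [← Matrix.mulVecLin_mul, mul_invOf_self, Matrix.mulVecLin_one]) with heQ2
  have hlin : G.mulVecLin =
      (eP : (Fin q → A) →ₗ[A] (Fin q → A)) ∘ₗ
        ((stdBlockMatrix k q m).mulVecLin ∘ₗ (eQ2 : (Fin m → A) →ₗ[A] (Fin m → A))) := by
    rw [hG2, Matrix.mulVecLin_mul, Matrix.mulVecLin_mul, LinearMap.comp_assoc]
    rfl
  have hrange : LinearMap.range G.mulVecLin =
      (loS A q k).map (eP : (Fin q → A) →ₗ[A] (Fin q → A)) := by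
    rw [hlin, LinearMap.range_comp, LinearMap.range_comp,
      LinearEquiv.range, Submodule.map_top, range_std hkm]
  have hker : LinearMap.ker G.mulVecLin =
      (hiS A m k).map (eQ2.symm : (Fin m → A) →ₗ[A] (Fin m → A)) := by
    rw [hlin, LinearEquiv.ker_comp, LinearMap.ker_comp, ker_std hkq hkm]
    exact Submodule.comap_equiv_eq_map_symm eQ2 _
  refine ⟨⟨P, Q, hPdet, hQdet, hPGQ⟩, ?_, ⟨?_, ?_⟩, ?_, ?_⟩
  · -- cokernel basis
    have equot : ((Fin q → A) ⧸ loS A q k) ≃ₗ[A]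
        ((Fin q → A) ⧸ LinearMap.range G.mulVecLin) :=
      Submodule.Quotient.equiv _ _ eP hrange.symm
    exact ⟨((Pi.basisFun A (Fin (q - k))).map (quotLoEquiv hkq).symm).map equot⟩
  · -- range basis
    have e1 : (loS A q k) ≃ₗ[A] LinearMap.range G.mulVecLin :=
      (eP.submoduleMap (loS A q k)).trans (LinearEquiv.ofEq _ _ hrange.symm)
    exact ⟨((Pi.basisFun A (Fin k)).map (loEquiv hkq).symm).map e1⟩
  · -- complement of the range
    refine ⟨(hiS A q k).map (eP : (Fin q → A) →ₗ[A] (Fin q → A)), ?_, ?_⟩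
    · rw [hrange]
      exact isCompl_map eP (isCompl_loS_hiS q k)
    · exact Module.Free.of_basis
        (((Pi.basisFun A (Fin (q - k))).map (hiEquiv hkq).symm).map (eP.submoduleMap _))
  · -- kernel basis
    have e2 : (hiS A m k) ≃ₗ[A] LinearMap.ker G.mulVecLin :=
      (eQ2.symm.submoduleMap (hiS A m k)).trans (LinearEquiv.ofEq _ _ hker.symm)
    exact ⟨((Pi.basisFun A (Fin (m - k))).map (hiEquiv hkm).symm).map e2⟩
  · -- complement of the kernel
    refine ⟨(loS A m k).map (eQ2.symm : (Fin m → A) →ₗ[A] (Fin m → A)), ?_, ?_⟩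
    · rw [hker]
      exact (isCompl_map eQ2.symm (isCompl_loS_hiS m k)).symm
    · exact Module.Free.of_basis
        (((Pi.basisFun A (Fin k)).map (loEquiv hkm).symm).map (eQ2.symm.submoduleMap _))
end

section
/- Let A be a commutative local ring and F an n×n matrix over A with F² = F. Then there exist an integer k with 0 ≤ k ≤ n and an invertible n×n matrix P over A such that P·F·P⁻¹ = I_{k,n,n}, the standard projection matrix with the identity I_k in the upper left corner and zeros elsewhere. Equivalently, every finitely generated projective module over a commutative local ring is free. -/
open Matrix

universe v

/-- The standard `n × n` projection matrix `I_{k,n,n} = diag(I_k, 0)`. -/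
def stdProjMatrix {A : Type*} [CommRing A] (k n : ℕ) : Matrix (Fin n) (Fin n) A :=
  Matrix.of fun i j => if (i : ℕ) = (j : ℕ) ∧ (i : ℕ) < k then 1 else 0

/-- Finitely generated projective modules over local rings are free. -/
theorem aux_free {A : Type*} [CommRing A] [IsLocalRing A]
    (M : Type*) [AddCommGroup M] [Module A M]
    (hfin : Module.Finite A M) (hproj : Module.Projective A M) : Module.Free A M := by
  haveI := hfin; haveI := hproj
  haveI := Module.finitePresentation_of_projective A M
  exact Module.free_of_flat_of_isLocalRing

/-- **Local freeness lemma.** Over a commutative local ring `A`, every idempotent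
`n × n` matrix is similar to a standard projection matrix `I_{k,n,n}`; equivalently,
every finitely generated projective module over a commutative local ring is free. -/
theorem idempotent_matrix_similar_stdProj_of_isLocalRing
    {A : Type*} [CommRing A] [IsLocalRing A] {n : ℕ}
    (F : Matrix (Fin n) (Fin n) A) (hF : F * F = F) :
    (∃ k ≤ n, ∃ P : Matrix (Fin n) (Fin n) A,
        IsUnit P.det ∧ P * F * P⁻¹ = stdProjMatrix k n) ∧
    ∀ (M : Type v) [AddCommGroup M] [Module A M],
      Module.Finite A M → Module.Projective A M → Module.Free A M := by
  refine ⟨?_, fun M _ _ hfin hproj => aux_free M hfin hproj⟩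
  set E := Fin n → A
  set f : E →ₗ[A] E := Matrix.toLin' F with hfdef
  have hff : ∀ x, f (f x) = f x := by
    intro x
    have : f ∘ₗ f = f := by
      rw [hfdef, ← Matrix.toLin'_mul, hF]
    exact DFunLike.congr_fun this x
  set p := LinearMap.range f with hp
  set q := LinearMap.ker f with hq
  -- the projection onto p
  set g : E →ₗ[A] p := f.codRestrict p (fun x => LinearMap.mem_range_self f x) with hg
  have hgproj : ∀ x : p, g x = x := by
    rintro ⟨y, z, rfl⟩
    exact Subtype.ext (hff z)
  have hcompl : IsCompl p q := by
    have hker : LinearMap.ker g = q := LinearMap.ker_codRestrict p f _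
    exact hker ▸ LinearMap.isCompl_of_proj hgproj
  -- p is finite, projective, hence free
  haveI : Module.Finite A p := Module.Finite.range f
  haveI : Module.Projective A p :=
    Module.Projective.of_split p.subtype g (LinearMap.ext hgproj)
  haveI : Module.Free A p := aux_free p ‹_› ‹_›
  -- q = ker f likewise, via the projection id - f
  set g' : E →ₗ[A] q := (LinearMap.id - f).codRestrict q
    (fun x => by simp [hq, LinearMap.mem_ker, map_sub, hff]) with hg'
  have hg'proj : ∀ x : q, g' x = x := by
    rintro ⟨y, hy⟩
    have hy' : f y = 0 := hy
    exact Subtype.ext (by simp [hg', hy'])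
  haveI : Module.Finite A q := by
    refine Module.Finite.of_surjective g' (fun x => ⟨x, hg'proj x⟩)
  haveI : Module.Projective A q :=
    Module.Projective.of_split q.subtype g' (LinearMap.ext hg'proj)
  haveI : Module.Free A q := aux_free q ‹_› ‹_›
  set k := Module.finrank A p with hk
  set m := Module.finrank A q with hm
  have hkm : k + m = n := by
    have e1 := (Submodule.prodEquivOfIsCompl p q hcompl).finrank_eq
    rw [Module.finrank_prod] at e1
    rw [hk, hm, e1]
    exact Module.finrank_fin_fun A
  have hkn : k ≤ n := by omega
  -- build the basis
  set bp := Module.finBasis A p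
  set bq := Module.finBasis A q
  set B0 : Module.Basis (Fin k ⊕ Fin m) A E :=
    (bp.prod bq).map (Submodule.prodEquivOfIsCompl p q hcompl)
  set B : Module.Basis (Fin n) A E := B0.reindex (finSumFinEquiv.trans (finCongr hkm))
  have hB : ∀ i : Fin n, f (B i) = if (i : ℕ) < k then B i else 0 := by
    intro i
    rw [Module.Basis.reindex_apply]
    rcases hj : (finSumFinEquiv.trans (finCongr hkm)).symm i with a | a
    · have hji : (i : ℕ) = (a : ℕ) := by
        have := congrArg (finSumFinEquiv.trans (finCongr hkm)) hj
        rw [Equiv.apply_symm_apply] at this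
        rw [this]
        simp
      have hlt : (i : ℕ) < k := by rw [hji]; exact a.is_lt
      rw [if_pos hlt]
      have hmem : B0 (Sum.inl a) ∈ p := by
        simp only [B0, Module.Basis.map_apply, Module.Basis.prod_apply]
        simp [Submodule.coe_prodEquivOfIsCompl']
      obtain ⟨z, hz⟩ := hmem
      rw [← hz]
      exact hff z
    · have hji : (i : ℕ) = k + (a : ℕ) := by
        have := congrArg (finSumFinEquiv.trans (finCongr hkm)) hj
        rw [Equiv.apply_symm_apply] at this
        rw [this]
        simp
      have hlt : ¬ (i : ℕ) < k := by omega
      rw [if_neg hlt]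
      have hmem : B0 (Sum.inr a) ∈ q := by
        simp only [B0, Module.Basis.map_apply, Module.Basis.prod_apply]
        simp [Submodule.coe_prodEquivOfIsCompl']
      exact hmem
  -- the change of basis matrix
  set e : Module.Basis (Fin n) A E := Pi.basisFun A (Fin n)
  set P := B.toMatrix e with hP
  have hPinv : P * e.toMatrix B = 1 := B.toMatrix_mul_toMatrix_flip e
  have hdet : IsUnit P.det := Matrix.isUnit_det_of_right_inverse hPinv
  have hPinv' : P⁻¹ = e.toMatrix B := Matrix.inv_eq_right_inv hPinv
  refine ⟨k, hkn, P, hdet, ?_⟩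
  have hFmat : F = LinearMap.toMatrix e e f := by
    rw [show e = Pi.basisFun A (Fin n) from rfl, LinearMap.toMatrix_eq_toMatrix', hfdef,
      LinearMap.toMatrix'_toLin']
  rw [hPinv', hFmat, hP, basis_toMatrix_mul_linearMap_toMatrix_mul_basis_toMatrix]
  ext i j
  rw [LinearMap.toMatrix_apply, hB j]
  by_cases hjk : (j : ℕ) < k
  · rw [if_pos hjk, B.repr_self, stdProjMatrix]
    simp only [Matrix.of_apply, Finsupp.single_apply]
    by_cases hij : j = i
    · subst hij; simp [hjk]
    · rw [if_neg hij, if_neg]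
      rintro ⟨h1, -⟩
      exact hij (Fin.ext h1.symm)
  · rw [if_neg hjk, map_zero, stdProjMatrix]
    have hni : ¬((i : ℕ) = (j : ℕ) ∧ (i : ℕ) < k) := by
      rintro ⟨h1, h2⟩; exact hjk (h1 ▸ h2)
    simp [hni]
end

section
/- Let A be a commutative local ring with maximal ideal m, and let G be a q×m′ matrix over A. Then there exist an integer k, an invertible q×q matrix P and an invertible m′×m′ matrix Q over A such that P·G·Q is the block matrix with I_k in the upper left corner, zero blocks off the diagonal, and a (q−k)×(m′−k) block G′ in the lower right corner all of whose entries lie in the maximal ideal m. -/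
open Matrix IsLocalRing

private lemma matrix_aux {A : Type*} [CommRing A] [IsLocalRing A] {q m' : ℕ} :
    ∀ (n d : ℕ) (G : Matrix (Fin q) (Fin m') A), q - d ≤ n →
      (∀ (i : Fin q) (j : Fin m'), ((i : ℕ) < d ∨ (j : ℕ) < d) →
        G i j = if (i : ℕ) = (j : ℕ) then 1 else 0) →
      ∃ (k : ℕ) (P : Matrix (Fin q) (Fin q) A) (Q : Matrix (Fin m') (Fin m') A),
        IsUnit P.det ∧ IsUnit Q.det ∧
        (∀ (i : Fin q) (j : Fin m'), ((i : ℕ) < k ∨ (j : ℕ) < k) →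
          (P * G * Q) i j = if (i : ℕ) = (j : ℕ) then 1 else 0) ∧
        (∀ (i : Fin q) (j : Fin m'), k ≤ (i : ℕ) → k ≤ (j : ℕ) →
          (P * G * Q) i j ∈ maximalIdeal A) := by
  intro n
  induction n with
  | zero =>
      intro d G hn hpat
      refine ⟨d, 1, 1, by simp, by simp, ?_, ?_⟩
      · intro i j hij
        simpa using hpat i j hij
      · intro i j hi _
        exact absurd (lt_of_lt_of_le i.isLt (Nat.le_of_sub_eq_zero (Nat.le_zero.mp hn)))
          (not_lt.mpr hi)
  | succ n ih =>
      intro d G hn hpat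
      by_cases hall : ∀ (i : Fin q) (j : Fin m'), d ≤ (i : ℕ) → d ≤ (j : ℕ) →
          G i j ∈ maximalIdeal A
      · exact ⟨d, 1, 1, by simp, by simp, fun i j hij => by simpa using hpat i j hij,
          fun i j hi hj => by simpa using hall i j hi hj⟩
      push_neg at hall
      obtain ⟨i₀, j₀, hi₀, hj₀, hu⟩ := hall
      have hdq : d < q := lt_of_le_of_lt hi₀ i₀.isLt
      have hdm : d < m' := lt_of_le_of_lt hj₀ j₀.isLt
      set ed : Fin q := ⟨d, hdq⟩ with hed
      set fd : Fin m' := ⟨d, hdm⟩ with hfd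
      set σ : Equiv.Perm (Fin q) := Equiv.swap ed i₀ with hσ
      set τ : Equiv.Perm (Fin m') := Equiv.swap fd j₀ with hτ
      -- the pivot is a unit
      have huu : IsUnit (G i₀ j₀) := by
        by_contra h
        exact hu ((IsLocalRing.mem_maximalIdeal _).mpr h)
      obtain ⟨U, hU⟩ := huu
      set v : A := ((U⁻¹ : Aˣ) : A) with hv
      have hvu : v * G i₀ j₀ = 1 := by rw [hv, ← hU]; exact U.inv_mul
      -- step 1 : swap rows d,i₀ and columns d,j₀
      set G₁ : Matrix (Fin q) (Fin m') A := G.submatrix σ τ with hG₁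
      -- step 2 : scale row d by v
      set D : Matrix (Fin q) (Fin q) A :=
        Matrix.diagonal (fun i => if i = ed then v else 1) with hD
      set G₂ : Matrix (Fin q) (Fin m') A := D * G₁ with hG₂
      have h2 : ∀ i j, G₂ i j = (if i = ed then v else 1) * G (σ i) (τ j) := by
        intro i j
        rw [hG₂, Matrix.diagonal_mul, hG₁, Matrix.submatrix_apply]
      have h2piv : G₂ ed fd = 1 := by
        rw [h2]
        simp [hσ, hτ, Equiv.swap_apply_left, hvu]
      -- σ and τ move indices ≥ d to indices ≥ d and fix indices < d
      have hσge : ∀ i : Fin q, d ≤ (i : ℕ) → d ≤ ((σ i : Fin q) : ℕ) := by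
        intro i hi
        rcases Equiv.swap_apply_def ed i₀ i with _
        by_cases h1 : i = ed
        · simp [hσ, h1, Equiv.swap_apply_left, hi₀]
        by_cases h2 : i = i₀
        · simp [hσ, h2, Equiv.swap_apply_right, hed]
        · rw [hσ, Equiv.swap_apply_of_ne_of_ne h1 h2]; exact hi
      have hτge : ∀ j : Fin m', d ≤ (j : ℕ) → d ≤ ((τ j : Fin m') : ℕ) := by
        intro j hj
        by_cases h1 : j = fd
        · simp [hτ, h1, Equiv.swap_apply_left, hj₀]
        by_cases h2 : j = j₀
        · simp [hτ, h2, Equiv.swap_apply_right, hfd]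
        · rw [hτ, Equiv.swap_apply_of_ne_of_ne h1 h2]; exact hj
      have hσlt : ∀ i : Fin q, (i : ℕ) < d → σ i = i := by
        intro i hi
        have h1 : i ≠ ed := fun h => by rw [h] at hi; simp [hed] at hi
        have h2 : i ≠ i₀ := by
          intro h; rw [h] at hi; exact absurd hi₀ (not_le.mpr hi)
        rw [hσ, Equiv.swap_apply_of_ne_of_ne h1 h2]
      have hτlt : ∀ j : Fin m', (j : ℕ) < d → τ j = j := by
        intro j hj
        have h1 : j ≠ fd := fun h => by rw [h] at hj; simp [hfd] at hj
        have h2 : j ≠ j₀ := by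
          intro h; rw [h] at hj; exact absurd hj₀ (not_le.mpr hj)
        rw [hτ, Equiv.swap_apply_of_ne_of_ne h1 h2]
      have h2pat : ∀ (i : Fin q) (j : Fin m'), ((i : ℕ) < d ∨ (j : ℕ) < d) →
          G₂ i j = if (i : ℕ) = (j : ℕ) then 1 else 0 := by
        intro i j hij
        rcases hij with hi | hj
        · have hne : i ≠ ed := by
            intro h; rw [h] at hi; simp [hed] at hi
          rw [h2, if_neg hne, one_mul, hσlt i hi]
          by_cases hj : (j : ℕ) < d
          · rw [hτlt j hj]; exact hpat i j (Or.inl hi)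
          · have hτj := hτge j (not_lt.mp hj)
            rw [hpat i (τ j) (Or.inl hi), if_neg (by omega), if_neg (by omega)]
        · rw [h2, hτlt j hj]
          have hGσ : G (σ i) j = if ((σ i : Fin q) : ℕ) = (j : ℕ) then 1 else 0 :=
            hpat (σ i) j (Or.inr hj)
          by_cases hi : (i : ℕ) < d
          · have hne : i ≠ ed := by
              intro h; rw [h] at hi; simp [hed] at hi
            rw [if_neg hne, one_mul, hσlt i hi, hpat i j (Or.inr hj)]
          · have hσi := hσge i (not_lt.mp hi)
            have h0 : ¬(((σ i : Fin q) : ℕ) = (j : ℕ)) := by omega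
            have h1 : ¬((i : ℕ) = (j : ℕ)) := by omega
            rw [hGσ, if_neg h0, mul_zero, if_neg h1]
      -- step 3 : clear column d
      set a : Fin q → A := fun i => if i = ed then 0 else G₂ i fd with ha
      set cL : Matrix (Fin q) (Fin q) A :=
        Matrix.of (fun i i' => a i * (if i' = ed then (1 : A) else 0)) with hcL
      set L : Matrix (Fin q) (Fin q) A := 1 - cL with hL
      set G₃ : Matrix (Fin q) (Fin m') A := L * G₂ with hG₃
      have hcLmul : ∀ (X : Matrix (Fin q) (Fin m') A) i j, (cL * X) i j = a i * X ed j := by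
        intro X i j
        rw [Matrix.mul_apply]
        rw [Finset.sum_eq_single ed]
        · simp [hcL]
        · intro b _ hb; simp [hcL, hb]
        · simp
      have h3 : ∀ i j, G₃ i j = G₂ i j - a i * G₂ ed j := by
        intro i j
        rw [hG₃, hL, Matrix.sub_mul, Matrix.one_mul, Matrix.sub_apply, hcLmul]
      have hLinv : L * (1 + cL) = 1 := by
        have hc2 : cL * cL = 0 := by
          ext i j
          rw [Matrix.mul_apply]
          apply Finset.sum_eq_zero
          intro b _
          by_cases hb : b = ed
          · simp [hcL, hb, ha]
          · simp [hcL, hb]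
        have h' : L * (1 + cL) = 1 - cL * cL := by rw [hL]; noncomm_ring
        rw [h', hc2, sub_zero]
      have h3rowed : ∀ j, G₃ ed j = G₂ ed j := by
        intro j; rw [h3]; simp [ha]
      have h3piv : G₃ ed fd = 1 := by rw [h3rowed, h2piv]
      have h3col : ∀ i, i ≠ ed → G₃ i fd = 0 := by
        intro i hi
        rw [h3, h2piv]
        simp [ha, hi]
      have h3pat : ∀ (i : Fin q) (j : Fin m'), ((i : ℕ) < d ∨ (j : ℕ) < d) →
          G₃ i j = if (i : ℕ) = (j : ℕ) then 1 else 0 := by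
        intro i j hij
        rw [h3]
        rcases hij with hi | hj
        · have hne : i ≠ ed := by
            intro h; rw [h] at hi; simp [hed] at hi
          have : G₂ i fd = 0 := by
            rw [h2pat i fd (Or.inl hi)]
            simp [hfd]; omega
          rw [ha]
          simp only [if_neg hne, this, zero_mul, sub_zero]
          exact h2pat i j (Or.inl hi)
        · have : G₂ ed j = 0 := by
            rw [h2pat ed j (Or.inr hj)]
            simp [hed]; omega
          rw [this, mul_zero, sub_zero]
          exact h2pat i j (Or.inr hj)
      -- step 4 : clear row d
      set b : Fin m' → A := fun j => if j = fd then 0 else G₃ ed j with hb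
      set cM : Matrix (Fin m') (Fin m') A :=
        Matrix.of (fun j' j => (if j' = fd then (1 : A) else 0) * b j) with hcM
      set M : Matrix (Fin m') (Fin m') A := 1 - cM with hM
      set G₄ : Matrix (Fin q) (Fin m') A := G₃ * M with hG₄
      have hcMmul : ∀ (X : Matrix (Fin q) (Fin m') A) i j, (X * cM) i j = X i fd * b j := by
        intro X i j
        rw [Matrix.mul_apply]
        rw [Finset.sum_eq_single fd]
        · simp [hcM]
        · intro c _ hc; simp [hcM, hc]
        · simp
      have h4 : ∀ i j, G₄ i j = G₃ i j - G₃ i fd * b j := by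
        intro i j
        rw [hG₄, hM, Matrix.mul_sub, Matrix.mul_one, Matrix.sub_apply, hcMmul]
      have hMinv : (1 + cM) * M = 1 := by
        have hc2 : cM * cM = 0 := by
          ext i j
          rw [Matrix.mul_apply]
          apply Finset.sum_eq_zero
          intro c _
          by_cases hc : c = fd
          · simp [hcM, hc, hb]
          · simp [hcM, hc]
        have h' : (1 + cM) * M = 1 - cM * cM := by rw [hM]; noncomm_ring
        rw [h', hc2, sub_zero]
      have h4pat : ∀ (i : Fin q) (j : Fin m'), ((i : ℕ) < d + 1 ∨ (j : ℕ) < d + 1) →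
          G₄ i j = if (i : ℕ) = (j : ℕ) then 1 else 0 := by
        intro i j hij
        rw [h4]
        by_cases hied : i = ed
        · subst hied
          rw [h3piv, one_mul, hb]
          by_cases hjfd : j = fd
          · subst hjfd; simp only [eq_self_iff_true, if_true, sub_zero, h3piv]; simp [hed, hfd]
          · have hdj : (d : ℕ) ≠ (j : ℕ) := by
              intro h; exact hjfd (Fin.ext h.symm)
            simp only [if_neg hjfd, sub_self, hed]
            rw [if_neg hdj]
        · have hifd0 : G₃ i fd = 0 := h3col i hied
          rw [hifd0, zero_mul, sub_zero]
          have hi_ne_d : (i : ℕ) ≠ d := fun h => hied (Fin.ext h)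
          rcases hij with hi | hj
          · exact h3pat i j (Or.inl (by omega))
          · by_cases hjfd : j = fd
            · subst hjfd
              rw [h3col i hied]
              have hne : (i : ℕ) ≠ ((fd : Fin m') : ℕ) := by simpa [hfd] using hi_ne_d
              rw [if_neg hne]
            · have hj_ne_d : (j : ℕ) ≠ d := fun h => hjfd (Fin.ext h)
              exact h3pat i j (Or.inr (by omega))
      -- assemble the transformation
      set P₁ : Matrix (Fin q) (Fin q) A := L * (D * σ.permMatrix A) with hP₁
      set Q₁ : Matrix (Fin m') (Fin m') A := τ.permMatrix A * M with hQ₁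
      have hPGQ : P₁ * G * Q₁ = G₄ := by
        have e1 : σ.permMatrix A * G * τ.permMatrix A = G₁ := by
          rw [PEquiv.toMatrix_toPEquiv_mul, PEquiv.mul_toMatrix_toPEquiv, hG₁, hτ,
            Equiv.symm_swap, Matrix.submatrix_submatrix]
          rfl
        rw [hP₁, hQ₁, hG₄, hG₃, hG₂, ← e1]
        simp only [Matrix.mul_assoc]
      -- invertibility
      have hdetL : IsUnit L.det := Matrix.isUnit_det_of_right_inverse hLinv
      have hdetM : IsUnit M.det := Matrix.isUnit_det_of_left_inverse hMinv
      have hdetD : IsUnit D.det := by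
        apply Matrix.isUnit_det_of_right_inverse
          (B := Matrix.diagonal (fun i => if i = ed then G i₀ j₀ else 1))
        rw [hD, Matrix.diagonal_mul_diagonal]
        convert Matrix.diagonal_one with i
        by_cases h : i = ed <;> simp [h, hvu]
      have hdetσ : IsUnit (σ.permMatrix A).det := by
        rw [Matrix.det_permutation]
        exact (Equiv.Perm.sign σ).isUnit.map (Int.castRingHom A)
      have hdetτ : IsUnit (τ.permMatrix A).det := by
        rw [Matrix.det_permutation]
        exact (Equiv.Perm.sign τ).isUnit.map (Int.castRingHom A)
      have hdetP₁ : IsUnit P₁.det := by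
        rw [hP₁, Matrix.det_mul, Matrix.det_mul]
        exact (hdetL.mul (hdetD.mul hdetσ))
      have hdetQ₁ : IsUnit Q₁.det := by
        rw [hQ₁, Matrix.det_mul]
        exact hdetτ.mul hdetM
      -- apply the induction hypothesis to G₄ at level d + 1
      obtain ⟨k, P', Q', hP', hQ', hpat', hmax'⟩ := ih (d + 1) G₄ (by omega) h4pat
      refine ⟨k, P' * P₁, Q₁ * Q', ?_, ?_, ?_, ?_⟩
      · rw [Matrix.det_mul]; exact hP'.mul hdetP₁
      · rw [Matrix.det_mul]; exact hdetQ₁.mul hQ'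
      · intro i j hij
        have h' : P' * P₁ * G * (Q₁ * Q') = P' * G₄ * Q' := by
          rw [← hPGQ]; simp only [Matrix.mul_assoc]
        rw [h']; exact hpat' i j hij
      · intro i j hi hj
        have h' : P' * P₁ * G * (Q₁ * Q') = P' * G₄ * Q' := by
          rw [← hPGQ]; simp only [Matrix.mul_assoc]
        rw [h']; exact hmax' i j hi hj

/-- **Local presentation lemma.** Over a commutative local ring `A`, any `q × m'`
matrix `G` is equivalent to a block matrix with `I_k` in the upper left corner, zero
off-diagonal blocks, and a lower right block all of whose entries lie in the maximal
ideal. -/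
theorem matrix_equiv_block_identity_and_residually_zero_of_isLocalRing
    {A : Type*} [CommRing A] [IsLocalRing A] {q m' : ℕ}
    (G : Matrix (Fin q) (Fin m') A) :
    ∃ (k : ℕ) (P : Matrix (Fin q) (Fin q) A) (Q : Matrix (Fin m') (Fin m') A),
      IsUnit P.det ∧ IsUnit Q.det ∧
      (∀ (i : Fin q) (j : Fin m'), ((i : ℕ) < k ∨ (j : ℕ) < k) →
        (P * G * Q) i j = if (i : ℕ) = (j : ℕ) then 1 else 0) ∧
      (∀ (i : Fin q) (j : Fin m'), k ≤ (i : ℕ) → k ≤ (j : ℕ) →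
        (P * G * Q) i j ∈ maximalIdeal A) := by
  exact matrix_aux q 0 G (by omega) (fun i j hij => by omega)
end

section
/- Let A be a commutative ring, F₁ an m×m matrix over A with F₁² = F₁, and F₂ an n×n matrix over A with F₂² = F₂. If the image of F₁ in A^m and the image of F₂ in A^n are isomorphic as A-modules, then X^n·det(X·I_m − F₁) = X^m·det(X·I_n − F₂) in A[X]. -/
open Matrix Polynomial

section Aux

variable {A : Type*} [CommRing A]

lemma aux_charpoly_mulVecLin [Nontrivial A] {m : ℕ} (F : Matrix (Fin m) (Fin m) A) :
    (F.mulVecLin).charpoly = F.charpoly := by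
  rw [← LinearMap.charpoly_toMatrix F.mulVecLin (Pi.basisFun A (Fin m)),
    LinearMap.toMatrix_eq_toMatrix', ← Matrix.toLin'_apply', LinearMap.toMatrix'_toLin']

lemma aux_charpoly_zero_end [Nontrivial A] (k : ℕ) :
    (0 : Module.End A (Fin k → A)).charpoly = X ^ k := by
  rw [← LinearMap.charpoly_toMatrix (0 : Module.End A (Fin k → A)) (Pi.basisFun A (Fin k)),
    map_zero]
  simp [Matrix.charpoly, charmatrix, Matrix.det_smul, smul_eq_mul]

lemma aux_isProj {m : ℕ} (F : Matrix (Fin m) (Fin m) A) (hF : F * F = F) :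
    LinearMap.IsProj (LinearMap.range F.mulVecLin) F.mulVecLin := by
  constructor
  · intro x; exact LinearMap.mem_range_self _ x
  · rintro x ⟨y, rfl⟩
    rw [← LinearMap.comp_apply, ← Matrix.mulVecLin_mul, hF]

lemma aux_conj_prodMap {M₁ M₂ M₃ M₄ : Type*} [AddCommGroup M₁] [AddCommGroup M₂]
    [AddCommGroup M₃] [AddCommGroup M₄] [Module A M₁] [Module A M₂] [Module A M₃] [Module A M₄]
    (e₁ : M₁ ≃ₗ[A] M₃) (e₂ : M₂ ≃ₗ[A] M₄) (f : Module.End A M₁) (g : Module.End A M₂) :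
    (e₁.prodCongr e₂).conj (f.prodMap g) = (e₁.conj f).prodMap (e₂.conj g) := by
  ext x <;>
    simp [LinearEquiv.conj_apply, LinearEquiv.prodCongr_symm, LinearEquiv.prodCongr_apply]

lemma aux_conj_zero {M₁ M₂ : Type*} [AddCommGroup M₁] [AddCommGroup M₂]
    [Module A M₁] [Module A M₂] (e : M₁ ≃ₗ[A] M₂) :
    e.conj (0 : Module.End A M₁) = 0 := by
  apply LinearMap.ext; intro x
  simp [LinearEquiv.conj_apply_apply]

lemma aux_prodComm_symm {M N : Type*} [AddCommMonoid M] [AddCommMonoid N]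
    [Module A M] [Module A N] (x : N × M) :
    (LinearEquiv.prodComm A M N).symm x = x.swap := rfl

end Aux

/-- **Lemma 1.3.** If `F₁` (of size `m × m`) and `F₂` (of size `n × n`) are idempotent
matrices over a commutative ring `A` with isomorphic images, then
`X ^ n * charpoly F₁ = X ^ m * charpoly F₂`. -/
theorem charpoly_mul_X_pow_eq_of_linearEquiv_range
    {A : Type*} [CommRing A] {m n : ℕ}
    (F₁ : Matrix (Fin m) (Fin m) A) (hF₁ : F₁ * F₁ = F₁)
    (F₂ : Matrix (Fin n) (Fin n) A) (hF₂ : F₂ * F₂ = F₂)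
    (h : Nonempty (LinearMap.range F₁.mulVecLin ≃ₗ[A] LinearMap.range F₂.mulVecLin)) :
    (Polynomial.X : A[X]) ^ n * F₁.charpoly
      = (Polynomial.X : A[X]) ^ m * F₂.charpoly := by
  classical
  rcases subsingleton_or_nontrivial A with hs | hn
  · exact Subsingleton.elim _ _
  obtain ⟨φ⟩ := h
  set p₁ := F₁.mulVecLin with hp₁def
  set p₂ := F₂.mulVecLin with hp₂def
  have hp₁ := aux_isProj F₁ hF₁
  have hp₂ := aux_isProj F₂ hF₂
  set r₁ := LinearMap.range p₁
  set r₂ := LinearMap.range p₂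
  set k₁ := LinearMap.ker p₁
  set k₂ := LinearMap.ker p₂
  let d₁ : (r₁ × k₁) ≃ₗ[A] (Fin m → A) := r₁.prodEquivOfIsCompl k₁ hp₁.isCompl
  let d₂ : (r₂ × k₂) ≃ₗ[A] (Fin n → A) := r₂.prodEquivOfIsCompl k₂ hp₂.isCompl
  let D : ((r₁ × k₁) × (r₂ × k₂)) ≃ₗ[A] (Fin m → A) × (Fin n → A) := d₁.prodCongr d₂
  let swap : (r₁ × r₂) ≃ₗ[A] (r₁ × r₂) :=
    (LinearEquiv.prodComm A _ _).trans (φ.symm.prodCongr φ)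
  let σ : ((r₁ × k₁) × (r₂ × k₂)) ≃ₗ[A] ((r₁ × k₁) × (r₂ × k₂)) :=
    (LinearEquiv.prodProdProdComm A _ _ _ _).trans
      ((swap.prodCongr (LinearEquiv.refl A (k₁ × k₂))).trans
        (LinearEquiv.prodProdProdComm A _ _ _ _).symm)
  set Q₁ : Module.End A ((r₁ × k₁) × (r₂ × k₂)) :=
    (LinearMap.prodMap LinearMap.id 0).prodMap 0 with hQ₁def
  set Q₂ : Module.End A ((r₁ × k₁) × (r₂ × k₂)) :=
    (0 : Module.End A (r₁ × k₁)).prodMap (LinearMap.prodMap LinearMap.id 0) with hQ₂def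
  have hG₁ : p₁.prodMap (0 : Module.End A (Fin n → A)) = D.conj Q₁ := by
    rw [hQ₁def]
    show _ = (d₁.prodCongr d₂).conj _
    rw [aux_conj_prodMap, aux_conj_zero, ← hp₁.eq_conj_prodMap]
  have hG₂ : (0 : Module.End A (Fin m → A)).prodMap p₂ = D.conj Q₂ := by
    rw [hQ₂def]
    show _ = (d₁.prodCongr d₂).conj _
    rw [aux_conj_prodMap, aux_conj_zero, ← hp₂.eq_conj_prodMap]
  have hσ : σ.conj Q₁ = Q₂ := by
    apply LinearMap.ext
    rintro ⟨⟨a, b⟩, ⟨c, d⟩⟩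
    simp [σ, swap, hQ₁def, hQ₂def, LinearEquiv.conj_apply_apply,
      LinearEquiv.prodProdProdComm_symm, LinearEquiv.prodCongr_symm, LinearEquiv.trans_symm,
      LinearEquiv.prodCongr_apply, LinearEquiv.trans_apply,
      LinearEquiv.prodComm_apply, aux_prodComm_symm, Prod.ext_iff]
  have hD : D.symm.conj (D.conj Q₁) = Q₁ := by
    apply LinearMap.ext; intro x
    simp [LinearEquiv.conj_apply_apply]
  have key : (0 : Module.End A (Fin m → A)).prodMap p₂
      = ((D.symm.trans σ).trans D).conj (p₁.prodMap (0 : Module.End A (Fin n → A))) := by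
    have h0 : ((D.symm.trans σ).trans D).conj (p₁.prodMap (0 : Module.End A (Fin n → A)))
        = D.conj (σ.conj (D.symm.conj (p₁.prodMap (0 : Module.End A (Fin n → A))))) := rfl
    rw [h0, hG₁, hD, hσ, ← hG₂]
  have h1 : (p₁.prodMap (0 : Module.End A (Fin n → A))).charpoly
      = F₁.charpoly * X ^ n := by
    rw [LinearMap.charpoly_prodMap, hp₁def, aux_charpoly_mulVecLin, aux_charpoly_zero_end]
  have h2 : ((0 : Module.End A (Fin m → A)).prodMap p₂).charpoly
      = X ^ m * F₂.charpoly := by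
    rw [LinearMap.charpoly_prodMap, hp₂def, aux_charpoly_mulVecLin, aux_charpoly_zero_end]
  have hc := LinearEquiv.charpoly_conj ((D.symm.trans σ).trans D)
    (p₁.prodMap (0 : Module.End A (Fin n → A)))
  rw [← key] at hc
  rw [mul_comm ((X : A[X]) ^ n) F₁.charpoly, ← h1, ← hc, h2]
end

section
/- Let A be a commutative ring, F an n×n matrix over A with F² = F, M ⊆ A^n the image of F, and r_0, …, r_n ∈ A defined by det(I_n + X·F) = Σ_{i=0}^n r_i (1+X)^i in A[X]. Let s ∈ A and 0 ≤ h ≤ n. Then the localization M_P is a free A_P-module of rank h for every prime ideal P of A with s ∉ P if and only if the image of r_h in A_s equals 1, i.e., there exists an integer m with r_h·s^m = s^m in A. If moreover s is idempotent, this holds if and only if r_h·s = s. Finally, if (s_0, …, s_n) is a fundamental system of orthogonal idempotents of A such that for each h the localization M_P is free of rank h over A_P for every prime ideal P with s_h ∉ P, then s_h = r_h for h = 0, …, n. -/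
open Polynomial Matrix


section LocalPart
variable {B : Type*} [CommRing B] {n : ℕ}

lemma mulVecLin_fix {G : Matrix (Fin n) (Fin n) B} (hG : G * G = G)
    {x : Fin n → B} (hx : x ∈ LinearMap.range G.mulVecLin) : G.mulVecLin x = x := by
  obtain ⟨y, rfl⟩ := hx
  simp [Matrix.mulVecLin_apply, Matrix.mulVec_mulVec, hG]

lemma isCompl_rk {G : Matrix (Fin n) (Fin n) B} (hG : G * G = G) :
    IsCompl (LinearMap.range G.mulVecLin) (LinearMap.ker G.mulVecLin) := by
  have h := LinearMap.isCompl_of_proj (f := G.mulVecLin.rangeRestrict)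
    (fun x => Subtype.ext (mulVecLin_fix hG x.2))
  rwa [LinearMap.ker_rangeRestrict] at h

lemma projective_range {G : Matrix (Fin n) (Fin n) B} (hG : G * G = G) :
    Module.Projective B (LinearMap.range G.mulVecLin) := by
  refine Module.Projective.of_split (LinearMap.range G.mulVecLin).subtype
    G.mulVecLin.rangeRestrict ?_
  ext x i
  simp only [LinearMap.coe_comp, Function.comp_apply, Submodule.coe_subtype,
    LinearMap.codRestrict_apply, LinearMap.id_coe, id_eq]
  exact congrFun (mulVecLin_fix hG x.2) i

lemma exists_basis_range [IsLocalRing B] {G : Matrix (Fin n) (Fin n) B} (hG : G * G = G) :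
    ∃ k : ℕ, Nonempty (Module.Basis (Fin k) B (LinearMap.range G.mulVecLin)) := by
  have h1 : Module.Projective B (LinearMap.range G.mulVecLin) := projective_range hG
  have h2 : Module.Finite B (LinearMap.range G.mulVecLin) := Module.Finite.range _
  have h3 : Module.FinitePresentation B (LinearMap.range G.mulVecLin) :=
    Module.finitePresentation_of_projective _ _
  have h4 : Module.Free B (LinearMap.range G.mulVecLin) := Module.free_of_flat_of_isLocalRing
  exact ⟨_, ⟨Module.finBasis B _⟩⟩

lemma ker_eq_range1 {G : Matrix (Fin n) (Fin n) B} (hG : G * G = G) :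
    LinearMap.ker G.mulVecLin = LinearMap.range (1 - G).mulVecLin := by
  ext x
  constructor
  · intro hx
    refine ⟨x, ?_⟩
    simp only [Matrix.mulVecLin_apply, Matrix.sub_mulVec, Matrix.one_mulVec]
    rw [show G.mulVec x = 0 from hx]
    simp
  · rintro ⟨y, rfl⟩
    simp only [LinearMap.mem_ker, Matrix.mulVecLin_apply, Matrix.mulVec_mulVec,
      Matrix.mul_sub, Matrix.mul_one, hG]
    simp

set_option maxHeartbeats 1000000 in
lemma det_one_add_X_smul_of_basis [IsLocalRing B] {G : Matrix (Fin n) (Fin n) B}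
    (hG : G * G = G) {k : ℕ} (b : Module.Basis (Fin k) B (LinearMap.range G.mulVecLin)) :
    (1 + (X : B[X]) • G.map C).det = (1 + X) ^ k := by
  have hG' : (1 - G) * (1 - G) = 1 - G := by
    rw [sub_mul, mul_sub, mul_sub, mul_one, one_mul, hG]; simp
  obtain ⟨m, ⟨c0⟩⟩ := exists_basis_range hG'
  let c : Module.Basis (Fin m) B (LinearMap.ker G.mulVecLin) :=
    c0.map (LinearEquiv.ofEq _ _ (ker_eq_range1 hG)).symm
  let e0 : Module.Basis (Fin k ⊕ Fin m) B (Fin n → B) :=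
    (b.prod c).map (Submodule.prodEquivOfIsCompl _ _ (isCompl_rk hG))
  have hcard : k + m = n := by
    have h1 := Module.finrank_eq_card_basis e0
    rw [Module.finrank_fin_fun] at h1
    simpa using h1.symm
  let σ : (Fin k ⊕ Fin m) ≃ Fin n := finSumFinEquiv.trans (finCongr hcard)
  let e : Module.Basis (Fin n) B (Fin n → B) := e0.reindex σ
  -- the matrix in basis e is diagonal
  let d : Fin n → B := fun j => Sum.elim (fun _ => (1 : B)) (fun _ => (0 : B)) (σ.symm j)
  have he0 : ∀ p : Fin k ⊕ Fin m,
      G.mulVecLin (e0 p) = (Sum.elim (fun _ => (1:B)) (fun _ => (0:B)) p) • e0 p := by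
    rintro (i | i)
    · have h1 : e0 (Sum.inl i) = (b i : Fin n → B) := by
        simp only [e0, Module.Basis.map_apply]
        have : (b.prod c) (Sum.inl i) = (b i, 0) :=
          Prod.ext (by simp) (by simp)
        rw [this, Submodule.coe_prodEquivOfIsCompl']
        simp
      rw [h1]
      simpa using mulVecLin_fix hG (b i).2
    · have h1 : e0 (Sum.inr i) = (c i : Fin n → B) := by
        simp only [e0, Module.Basis.map_apply]
        have : (b.prod c) (Sum.inr i) = (0, c i) :=
          Prod.ext (by simp) (by simp)
        rw [this, Submodule.coe_prodEquivOfIsCompl']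
        simp
      rw [h1]
      simpa using (c i).2
  have he : ∀ j, G.mulVecLin (e j) = d j • e j := by
    intro j
    have : e j = e0 (σ.symm j) := Module.Basis.reindex_apply e0 σ j
    rw [this]
    exact he0 (σ.symm j)
  have hmat : LinearMap.toMatrix e e G.mulVecLin = Matrix.diagonal d := by
    ext i j
    rw [LinearMap.toMatrix_apply, he j, _root_.map_smul, Module.Basis.repr_self]
    simp only [Finsupp.smul_single, smul_eq_mul, mul_one, Finsupp.single_apply,
      Matrix.diagonal_apply]
    split_ifs with h1 h2 h3
    · subst h1; rfl
    · exact absurd h1.symm h2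
    · exact absurd h3.symm h1
    · rfl
  -- change of basis
  let u : Module.Basis (Fin n) B (Fin n → B) := Pi.basisFun B (Fin n)
  have hG2 : G = u.toMatrix e * Matrix.diagonal d * e.toMatrix u := by
    rw [← hmat]
    rw [basis_toMatrix_mul_linearMap_toMatrix_mul_basis_toMatrix u e u e]
    rw [show LinearMap.toMatrix u u = LinearMap.toMatrix' from
      LinearMap.toMatrix_eq_toMatrix']
    rw [← Matrix.toLin'_apply' G, LinearMap.toMatrix'_toLin']
  -- now compute det over B[X]
  have hPQ : (u.toMatrix e).map (C : B →+* B[X]) * (e.toMatrix u).map C = 1 := by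
    rw [← Matrix.map_mul, Module.Basis.toMatrix_mul_toMatrix_flip, Matrix.map_one C (map_zero C) (map_one C)]
  have hQP : (e.toMatrix u).map (C : B →+* B[X]) * (u.toMatrix e).map C = 1 := by
    rw [← Matrix.map_mul, Module.Basis.toMatrix_mul_toMatrix_flip, Matrix.map_one C (map_zero C) (map_one C)]
  have hsplit : 1 + (X : B[X]) • G.map C =
      (u.toMatrix e).map C * (1 + (X : B[X]) • (Matrix.diagonal d).map C) * (e.toMatrix u).map C := by
    rw [Matrix.mul_add, Matrix.add_mul, Matrix.mul_one, hPQ]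
    congr 1
    rw [Matrix.mul_smul, Matrix.smul_mul]
    congr 1
    rw [← Matrix.map_mul, ← Matrix.map_mul, ← hG2]
  rw [hsplit, Matrix.det_mul, Matrix.det_mul, mul_comm, ← mul_assoc, ← Matrix.det_mul, hQP,
    Matrix.det_one, one_mul]
  have hdiag : 1 + (X : B[X]) • (Matrix.diagonal d).map C =
      Matrix.diagonal (fun j => 1 + X * C (d j)) := by
    ext i j
    rcases eq_or_ne i j with rfl | hij
    · simp [Matrix.add_apply, Matrix.smul_apply, Matrix.map_apply, Matrix.one_apply_eq,
        Matrix.diagonal_apply_eq, smul_eq_mul]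
    · simp [Matrix.add_apply, Matrix.smul_apply, Matrix.map_apply, Matrix.one_apply_ne hij,
        Matrix.diagonal_apply_ne _ hij, smul_eq_mul]
  rw [hdiag, Matrix.det_diagonal]
  rw [← Equiv.prod_comp σ]
  rw [Fintype.prod_sum_type]
  have hl : ∀ i : Fin k, d (σ (Sum.inl i)) = 1 := by intro i; simp [d]
  have hrr : ∀ i : Fin m, d (σ (Sum.inr i)) = 0 := by intro i; simp [d]
  simp only [hl, hrr, _root_.map_one, _root_.map_zero, mul_one, mul_zero, add_zero]
  simp [add_comm (1 : B[X]) X]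

end LocalPart

lemma coeff_one_add_X {B : Type*} [CommRing B] {n k : ℕ} (b : Fin (n+1) → B)
    (hb : ∑ i : Fin (n+1), C (b i) * (1+X)^(i:ℕ) = ((1+X)^k : B[X])) :
    ∀ i : Fin (n+1), b i = if (i:ℕ) = k then 1 else 0 := by
  have h2 := congrArg (aeval (X - 1 : B[X])) hb
  simp only [map_sum, _root_.map_mul, _root_.map_pow, _root_.map_add, _root_.map_one, aeval_C, aeval_X,
    algebraMap_eq, add_sub_cancel] at h2
  intro i
  have h3 := congrArg (fun p => coeff p (i:ℕ)) h2
  simp only [finset_sum_coeff, coeff_C_mul, coeff_X_pow, mul_ite, mul_one, mul_zero,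
    Fin.val_eq_val] at h3
  rw [Finset.sum_ite_eq, if_pos (Finset.mem_univ i)] at h3
  exact h3

lemma hr_mapped {A B : Type*} [CommRing A] [CommRing B] (φ : A →+* B) {n : ℕ}
    (F : Matrix (Fin n) (Fin n) A) (r : Fin (n+1) → A)
    (hr : (1 + (X : A[X]) • F.map C).det = ∑ i : Fin (n+1), C (r i) * (1+X)^(i:ℕ)) :
    (1 + (X : B[X]) • (F.map φ).map C).det
      = ∑ i : Fin (n+1), C (φ (r i)) * (1+X)^(i:ℕ) := by
  have h := congrArg (Polynomial.mapRingHom φ) hr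
  rw [RingHom.map_det] at h
  have hmat : (Polynomial.mapRingHom φ).mapMatrix (1 + (X : A[X]) • F.map C)
      = 1 + (X : B[X]) • (F.map φ).map C := by
    ext i j
    simp only [RingHom.mapMatrix_apply, Matrix.map_apply, Matrix.add_apply, Matrix.smul_apply,
      Matrix.one_apply, smul_eq_mul, _root_.map_add, _root_.map_mul, apply_ite (Polynomial.mapRingHom φ),
      _root_.map_one, _root_.map_zero, coe_mapRingHom, Polynomial.map_X, Polynomial.map_C,
      Polynomial.map_mul]
  rw [hmat] at h
  rw [h]
  simp only [map_sum, _root_.map_mul, _root_.map_pow, _root_.map_add, _root_.map_one, coe_mapRingHom,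
    Polynomial.map_C, Polynomial.map_X]

lemma sum_r_one {A : Type*} [CommRing A] {n : ℕ}
    (F : Matrix (Fin n) (Fin n) A) (r : Fin (n+1) → A)
    (hr : (1 + (X : A[X]) • F.map C).det = ∑ i : Fin (n+1), C (r i) * (1+X)^(i:ℕ)) :
    ∑ i : Fin (n+1), r i = 1 := by
  have h := congrArg (Polynomial.evalRingHom (0 : A)) hr
  rw [RingHom.map_det] at h
  have hmat : (Polynomial.evalRingHom (0:A)).mapMatrix (1 + (X : A[X]) • F.map C) = 1 := by
    ext i j
    simp only [RingHom.mapMatrix_apply, Matrix.map_apply, Matrix.add_apply, Matrix.smul_apply,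
      Matrix.one_apply, smul_eq_mul, _root_.map_add, _root_.map_mul, apply_ite (Polynomial.evalRingHom (0:A)),
      _root_.map_one, _root_.map_zero, coe_evalRingHom, eval_X, eval_C, zero_mul, add_zero,
      eval_mul]
  rw [hmat, Matrix.det_one] at h
  symm at h
  simpa using h

section Bridge
variable {A : Type*} [CommRing A] {n : ℕ} (S : Submonoid A)

/-- The componentwise localization map on `Fin n → A`. -/
noncomputable def piLoc : (Fin n → A) →ₗ[A] (Fin n → Localization S) :=
  (Finsupp.linearEquivFunOnFinite A (Localization S) (Fin n)).toLinearMap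
    ∘ₗ Finsupp.mapRange.linearMap (Algebra.linearMap A (Localization S))
    ∘ₗ (Finsupp.linearEquivFunOnFinite A A (Fin n)).symm.toLinearMap

instance piLoc_isLocalizedModule : IsLocalizedModule S (piLoc S (n := n)) := by
  haveI h1 : IsLocalizedModule S
      (Finsupp.mapRange.linearMap (α := Fin n) (Algebra.linearMap A (Localization S))
        ∘ₗ (Finsupp.linearEquivFunOnFinite A A (Fin n)).symm.toLinearMap) :=
    IsLocalizedModule.of_linearEquiv_right S _ _
  exact IsLocalizedModule.of_linearEquiv S _ _

lemma piLoc_apply (x : Fin n → A) (i : Fin n) :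
    piLoc S x i = algebraMap A (Localization S) (x i) := by
  simp [piLoc, Finsupp.linearEquivFunOnFinite]
  rfl

lemma piLoc_mulVecLin (F : Matrix (Fin n) (Fin n) A) (x : Fin n → A) :
    piLoc S (F.mulVecLin x)
      = (F.map (algebraMap A (Localization S))).mulVecLin (piLoc S x) := by
  funext i
  simp only [piLoc_apply, Matrix.mulVecLin_apply, Matrix.mulVec, dotProduct,
    Matrix.map_apply, map_sum, _root_.map_mul]

lemma localized'_range_eq (F : Matrix (Fin n) (Fin n) A) :
    (LinearMap.range F.mulVecLin).localized' (Localization S) S (piLoc S)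
      = LinearMap.range (F.map (algebraMap A (Localization S))).mulVecLin := by
  ext x
  rw [Submodule.mem_localized']
  constructor
  · rintro ⟨m, ⟨v, rfl⟩, s, rfl⟩
    have h1 : (algebraMap A (Localization S) s) • IsLocalizedModule.mk' (piLoc S) (F.mulVecLin v) s
        = piLoc S (F.mulVecLin v) := by
      rw [algebraMap_smul]
      exact IsLocalizedModule.mk'_cancel' (f := piLoc S) _ _
    obtain ⟨u, hu⟩ := IsLocalization.map_units (M := S) (Localization S) s
    have h2 : IsLocalizedModule.mk' (piLoc S) (F.mulVecLin v) s
        = (u⁻¹ : (Localization S)ˣ) • piLoc S (F.mulVecLin v) := by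
      rw [← h1, ← hu, ← Units.smul_def]
      exact (inv_smul_smul u _).symm
    have h3 : piLoc S (F.mulVecLin v)
        ∈ LinearMap.range (F.map (algebraMap A (Localization S))).mulVecLin :=
      ⟨piLoc S v, (piLoc_mulVecLin S F v).symm⟩
    rw [h2, Units.smul_def]
    exact Submodule.smul_mem _ _ h3
  · rintro ⟨w, rfl⟩
    obtain ⟨⟨v, s⟩, hvs⟩ := IsLocalizedModule.mk'_surjective S (piLoc S) w
    simp only [Function.uncurry] at hvs
    refine ⟨F.mulVecLin v, ⟨v, rfl⟩, s, ?_⟩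
    apply IsLocalizedModule.smul_injective (piLoc S) s
    show s • _ = s • _
    rw [IsLocalizedModule.mk'_cancel', ← hvs, piLoc_mulVecLin, Submonoid.smul_def,
      ← LinearMap.map_smul_of_tower, ← Submonoid.smul_def, IsLocalizedModule.mk'_cancel']


noncomputable def bridgeEquiv (F : Matrix (Fin n) (Fin n) A) :
    LocalizedModule S (LinearMap.range F.mulVecLin) ≃ₗ[Localization S]
      LinearMap.range (F.map (algebraMap A (Localization S))).mulVecLin := by
  let e1 := IsLocalizedModule.iso S
    ((LinearMap.range F.mulVecLin).toLocalized' (Localization S) S (piLoc S))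
  let e1B : LocalizedModule S (LinearMap.range F.mulVecLin) ≃ₗ[Localization S]
      (LinearMap.range F.mulVecLin).localized' (Localization S) S (piLoc S) :=
    { __ := e1, toLinearMap := e1.toLinearMap.extendScalarsOfIsLocalization S (Localization S) }
  exact e1B.trans (LinearEquiv.ofEq _ _ (localized'_range_eq S F))

end Bridge

section Key
variable {A : Type*} [CommRing A] {n : ℕ}
variable (F : Matrix (Fin n) (Fin n) A) (hF : F * F = F) (r : Fin (n + 1) → A)
variable (hr : (1 + (X : A[X]) • F.map C).det = ∑ i : Fin (n + 1), C (r i) * (1 + X) ^ (i : ℕ))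

include hF hr in
lemma key_prime (P : Ideal A) [P.IsPrime] :
    ∃ k : ℕ, Nonempty (Module.Basis (Fin k) (Localization.AtPrime P)
        (LocalizedModule P.primeCompl (LinearMap.range F.mulVecLin)))
      ∧ ∀ i : Fin (n + 1),
        algebraMap A (Localization.AtPrime P) (r i) = if (i : ℕ) = k then 1 else 0 := by
  have hF' : (F.map (algebraMap A (Localization.AtPrime P)))
      * (F.map (algebraMap A (Localization.AtPrime P)))
      = F.map (algebraMap A (Localization.AtPrime P)) := by
    rw [← Matrix.map_mul, hF]
  obtain ⟨k, ⟨bk⟩⟩ := exists_basis_range hF'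
  refine ⟨k, ⟨bk.map (bridgeEquiv P.primeCompl F).symm⟩, ?_⟩
  have hdet := det_one_add_X_smul_of_basis hF' bk
  have hmap := hr_mapped (algebraMap A (Localization.AtPrime P)) F r hr
  rw [hdet] at hmap
  exact coeff_one_add_X _ hmap.symm

include hF hr in
lemma key_prime_iff (P : Ideal A) [P.IsPrime] (h : Fin (n + 1)) :
    Nonempty (Module.Basis (Fin (h : ℕ)) (Localization.AtPrime P)
        (LocalizedModule P.primeCompl (LinearMap.range F.mulVecLin)))
      ↔ algebraMap A (Localization.AtPrime P) (r h) = 1 := by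
  constructor
  · rintro ⟨b⟩
    have hF' : (F.map (algebraMap A (Localization.AtPrime P)))
        * (F.map (algebraMap A (Localization.AtPrime P)))
        = F.map (algebraMap A (Localization.AtPrime P)) := by
      rw [← Matrix.map_mul, hF]
    have hdet := det_one_add_X_smul_of_basis hF' (b.map (bridgeEquiv P.primeCompl F))
    have hmap := hr_mapped (algebraMap A (Localization.AtPrime P)) F r hr
    rw [hdet] at hmap
    simpa using coeff_one_add_X _ hmap.symm h
  · intro h1
    obtain ⟨k, ⟨b⟩, hδ⟩ := key_prime F hF r hr P
    have h2 := hδ h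
    by_cases hk : (h : ℕ) = k
    · exact ⟨b.reindex (finCongr hk.symm)⟩
    · rw [if_neg hk, h1] at h2
      exact absurd h2 one_ne_zero

include hF hr in
lemma r_mul_r (i j : Fin (n + 1)) : r i * r j = if i = j then r i else 0 := by
  have key : ∀ (J : Ideal A) (_ : J.IsMaximal),
      algebraMap A (Localization.AtPrime J) (r i * r j - (if i = j then r i else 0)) = 0 := by
    intro J hJ
    haveI := hJ.isPrime
    obtain ⟨k, -, hδ⟩ := key_prime F hF r hr J
    have hi := hδ i
    have hj := hδ j
    rcases eq_or_ne i j with rfl | hij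
    · rw [if_pos rfl, map_sub, _root_.map_mul, hi]
      by_cases hik : (i : ℕ) = k <;> simp [hik]
    · rw [if_neg hij, sub_zero, _root_.map_mul, hi, hj]
      by_cases hik : (i : ℕ) = k
      · by_cases hjk : (j : ℕ) = k
        · exact absurd (Fin.ext (hik.trans hjk.symm)) hij
        · simp [hjk]
      · simp [hik]
  have h0 := eq_zero_of_localization _ key
  rw [sub_eq_zero] at h0
  exact h0

end Key

/-- **Proposition 2.6.** Let `F` be an idempotent `n × n` matrix over a commutative ring
`A` with image `M ⊆ A^n`, and `r 0, …, r n` defined by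
`det(I + X • F) = ∑ i, r i • (1 + X) ^ i`.  For `s ∈ A` and `0 ≤ h ≤ n` : the localized
module `M_P` is free of rank `h` for every prime `P` avoiding `s` iff the image of
`r h` in `A_s` is `1`, iff `r h * s ^ m = s ^ m` for some `m`; if `s` is idempotent
this means `r h * s = s`; and any fundamental system of orthogonal idempotents
`s 0, …, s n` with the corresponding rank property must equal `r 0, …, r n`. -/
theorem localization_rank_iff_idempotent_eq_one_in_localization
    {A : Type*} [CommRing A] {n : ℕ}
    (F : Matrix (Fin n) (Fin n) A) (hF : F * F = F)
    (r : Fin (n + 1) → A)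
    (hr : (1 + (Polynomial.X : A[X]) • F.map Polynomial.C).det
        = ∑ i : Fin (n + 1), Polynomial.C (r i) * (1 + Polynomial.X) ^ (i : ℕ))
    (s : A) (h : Fin (n + 1)) :
    ((∀ (P : Ideal A) (hP : P.IsPrime), s ∉ P →
        Nonempty (Module.Basis (Fin (h : ℕ)) (Localization.AtPrime P)
          (LocalizedModule P.primeCompl (LinearMap.range F.mulVecLin)))) ↔
      algebraMap A (Localization (Submonoid.powers s)) (r h) = 1) ∧
    (algebraMap A (Localization (Submonoid.powers s)) (r h) = 1 ↔
      ∃ m : ℕ, r h * s ^ m = s ^ m) ∧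
    (IsIdempotentElem s →
      ((∀ (P : Ideal A) (hP : P.IsPrime), s ∉ P →
        Nonempty (Module.Basis (Fin (h : ℕ)) (Localization.AtPrime P)
          (LocalizedModule P.primeCompl (LinearMap.range F.mulVecLin)))) ↔
        r h * s = s)) ∧
    (∀ s' : Fin (n + 1) → A,
      (∑ k : Fin (n + 1), s' k) = 1 →
      (∀ k l : Fin (n + 1), k ≠ l → s' k * s' l = 0) →
      (∀ (k : Fin (n + 1)) (P : Ideal A) (hP : P.IsPrime), s' k ∉ P →
        Nonempty (Module.Basis (Fin (k : ℕ)) (Localization.AtPrime P)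
          (LocalizedModule P.primeCompl (LinearMap.range F.mulVecLin)))) →
      ∀ k : Fin (n + 1), s' k = r k) := by
  have hidem : ∀ i, r i * r i = r i := fun i => by simpa using r_mul_r F hF r hr i i
  have horth : ∀ i j, i ≠ j → r i * r j = 0 := fun i j hij => by
    simpa [hij] using r_mul_r F hF r hr i j
  -- part (b)
  have partb : algebraMap A (Localization (Submonoid.powers s)) (r h) = 1 ↔
      ∃ m : ℕ, r h * s ^ m = s ^ m := by
    constructor
    · intro h1
      rw [show (1 : Localization (Submonoid.powers s)) = algebraMap A _ 1 from (_root_.map_one _).symm] at h1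
      obtain ⟨c, hc⟩ := (IsLocalization.eq_iff_exists (Submonoid.powers s) _).mp h1
      obtain ⟨m, hm⟩ := c.2
      have hm' : s ^ m = (c : A) := hm
      refine ⟨m, ?_⟩
      rw [mul_one] at hc
      rw [mul_comm, hm']
      exact hc
    · rintro ⟨m, hm⟩
      have hu := IsLocalization.map_units (M := Submonoid.powers s)
        (Localization (Submonoid.powers s)) ⟨s ^ m, m, rfl⟩
      refine hu.mul_left_cancel ?_
      rw [mul_one, ← _root_.map_mul, mul_comm, hm]
  -- the forward (radical) argument
  have fwd : ∀ (t : A) (k : Fin (n + 1)), (∀ (P : Ideal A) (hP : P.IsPrime), t ∉ P →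
      Nonempty (Module.Basis (Fin (k : ℕ)) (Localization.AtPrime P)
        (LocalizedModule P.primeCompl (LinearMap.range F.mulVecLin)))) →
      ∃ m : ℕ, r k * t ^ m = t ^ m := by
    intro t k H
    have hrad : t ∈ (Ideal.span {r k}).radical := by
      rw [Ideal.radical_eq_sInf]
      refine Submodule.mem_sInf.mpr ?_
      rintro J ⟨hle, hprime⟩
      haveI := hprime
      by_contra hs
      have hb := H J hprime hs
      have h1 := (key_prime_iff F hF r hr J k).mp hb
      have h3 : IsUnit (algebraMap A (Localization.AtPrime J) (r k)) := by
        rw [h1]; exact isUnit_one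
      rw [IsLocalization.AtPrime.isUnit_to_map_iff (Localization.AtPrime J) J] at h3
      exact h3 (hle (Ideal.subset_span rfl))
    obtain ⟨m, hm⟩ := hrad
    rw [Ideal.mem_span_singleton] at hm
    obtain ⟨t', ht'⟩ := hm
    refine ⟨m, ?_⟩
    rw [ht', ← mul_assoc, hidem k]
  -- part (a)
  have parta : (∀ (P : Ideal A) (hP : P.IsPrime), s ∉ P →
      Nonempty (Module.Basis (Fin (h : ℕ)) (Localization.AtPrime P)
        (LocalizedModule P.primeCompl (LinearMap.range F.mulVecLin)))) ↔
      algebraMap A (Localization (Submonoid.powers s)) (r h) = 1 := by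
    constructor
    · intro H
      exact partb.mpr (fwd s h H)
    · intro h1 P hP hs
      haveI := hP
      obtain ⟨m, hm⟩ := partb.mp h1
      have hrP : r h ∉ P := by
        intro hmem
        have hsm : s ^ m ∈ P := by
          rw [← hm]; exact Ideal.mul_mem_right _ _ hmem
        exact hs (hP.mem_of_pow_mem _ hsm)
      apply (key_prime_iff F hF r hr P h).mpr
      obtain ⟨k, -, hδ⟩ := key_prime F hF r hr P
      have h2 := hδ h
      by_cases hk : (h : ℕ) = k
      · rwa [if_pos hk] at h2
      · exfalso
        rw [if_neg hk] at h2
        have h3 : IsUnit (algebraMap A (Localization.AtPrime P) (r h)) := by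
          rw [IsLocalization.AtPrime.isUnit_to_map_iff (Localization.AtPrime P) P]
          exact hrP
        rw [h2] at h3
        exact not_isUnit_zero h3
  refine ⟨parta, partb, ?_, ?_⟩
  · -- part (c)
    intro hs
    rw [parta, partb]
    constructor
    · rintro ⟨m, hm⟩
      match m with
      | 0 => rw [pow_zero, mul_one] at hm; rw [hm, one_mul]
      | Nat.succ m => rwa [hs.pow_succ_eq] at hm
    · intro h1
      exact ⟨1, by simpa using h1⟩
  · -- part (d)
    intro s' hsum' horth' H k
    have hidem' : ∀ l, IsIdempotentElem (s' l) := by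
      intro l
      have h0 : s' l * (∑ j, s' j) = s' l := by rw [hsum', mul_one]
      rw [Finset.mul_sum, Finset.sum_eq_single l
        (fun j _ hj => horth' l j fun hlj => hj (hlj.symm))
        (fun hl => absurd (Finset.mem_univ l) hl)] at h0
      exact h0
    have hrs : ∀ l, r l * s' l = s' l := by
      intro l
      obtain ⟨m, hm⟩ := fwd (s' l) l (H l)
      match m with
      | 0 => rw [pow_zero, mul_one] at hm; rw [hm, one_mul]
      | Nat.succ m => rwa [(hidem' l).pow_succ_eq] at hm
    have h4 : r k = r k * s' k := by
      have h5 : r k * (∑ l, s' l) = r k := by rw [hsum', mul_one]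
      rw [Finset.mul_sum, Finset.sum_eq_single k
        (fun l _ hlk => by rw [← hrs l, ← mul_assoc, horth k l fun hkl => hlk hkl.symm, zero_mul])
        (fun hk => absurd (Finset.mem_univ k) hk)] at h5
      exact h5.symm
    rw [← hrs k]
    exact h4.symm
end

section
/- Let A be a commutative ring, s_1, …, s_n ∈ A with s_1·A + ⋯ + s_n·A = A, and M an A-module. Then: (1) M is finitely generated if and only if each M_{s_i} is a finitely generated A_{s_i}-module; (2) M is finitely presented if and only if each M_{s_i} is a finitely presented A_{s_i}-module; (3) M is a finitely generated projective A-module if and only if each M_{s_i} is a finitely generated projective A_{s_i}-module. -/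
open LinearMap

section aux
variable {A : Type*} [CommRing A] {n : ℕ} (s : Fin n → A)
    (hs : Ideal.span (Set.range s) = ⊤)
    (M : Type*) [AddCommGroup M] [Module A M]

include hs in
lemma auxFinite
    (H : ∀ i : Fin n, Module.Finite (Localization (Submonoid.powers (s i)))
      (LocalizedModule (Submonoid.powers (s i)) M)) : Module.Finite A M := by
  apply Module.Finite.of_localizationSpan (Set.range s) hs
  rintro ⟨_, i, rfl⟩
  exact H i

include hs in
lemma auxFP
    (H : ∀ i : Fin n, Module.FinitePresentation (Localization (Submonoid.powers (s i)))
      (LocalizedModule (Submonoid.powers (s i)) M)) : Module.FinitePresentation A M := by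
  have hfin : Module.Finite A M := auxFinite s hs M fun i => haveI := H i; inferInstance
  obtain ⟨m, l, hl⟩ := Module.Finite.exists_fin' A M
  refine Module.finitePresentation_of_surjective l hl ?_
  rw [← Module.Finite.iff_fg]
  refine Module.Finite.of_localizationSpan'
    (Rₚ := fun g => Localization (Submonoid.powers g.val)) (Set.range s) hs
    (fun g => (LinearMap.ker l).toLocalized (Submonoid.powers g.val)) ?_
  rintro ⟨_, i, rfl⟩
  set p := Submonoid.powers (s i)
  haveI := H i
  haveI : Module.Finite (Localization p) (LocalizedModule p (Fin m → A)) :=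
    Module.Finite.of_isLocalizedModule p (LocalizedModule.mkLinearMap p _)
  rw [Module.Finite.iff_fg]
  have e := LinearMap.localized'_ker_eq_ker_localizedMap (Localization p) p
    (LocalizedModule.mkLinearMap p (Fin m → A)) (LocalizedModule.mkLinearMap p M) l
  show ((LinearMap.ker l).localized' (Localization p) p _).FG
  rw [e]
  apply Module.FinitePresentation.fg_ker
  intro x
  exact IsLocalizedModule.map_surjective p _ _ l hl x

include hs in
lemma auxProj [Module.FinitePresentation A M]
    (H : ∀ i : Fin n, Module.Projective (Localization (Submonoid.powers (s i)))
      (LocalizedModule (Submonoid.powers (s i)) M)) : Module.Projective A M := by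
  apply Module.projective_of_localization_maximal
  intro I hI
  have : ∃ i, s i ∉ I := by
    by_contra h
    push_neg at h
    have : Ideal.span (Set.range s) ≤ I := Ideal.span_le.mpr (by rintro _ ⟨i, rfl⟩; exact h i)
    rw [hs] at this
    exact hI.ne_top (top_le_iff.mp this)
  obtain ⟨i, hi⟩ := this
  set S := Submonoid.powers (s i) with hS
  have hle : S ≤ I.primeCompl := by
    rintro x ⟨k, rfl⟩ hx
    exact hi (hI.isPrime.mem_of_pow_mem k hx)
  let B := Localization S
  let Rₚ := Localization.AtPrime I
  let Mₚ := LocalizedModule I.primeCompl M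
  letI : Algebra B Rₚ := IsLocalization.localizationAlgebraOfSubmonoidLe _ _ S I.primeCompl hle
  haveI : IsScalarTower A B Rₚ :=
    IsLocalization.localization_isScalarTower_of_submonoid_le ..
  haveI : IsLocalization (Algebra.algebraMapSubmonoid B I.primeCompl) Rₚ :=
    IsLocalization.isLocalization_of_submonoid_le B Rₚ _ _ hle
  letI : Module B Mₚ := Module.compHom Mₚ (algebraMap B Rₚ)
  haveI : IsScalarTower A B Mₚ :=
    ⟨fun r r' m ↦ show algebraMap _ Rₚ (r • r') • m = _ by
      simp [Algebra.smul_def, ← IsScalarTower.algebraMap_apply, mul_smul]; rfl⟩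
  haveI : IsScalarTower B Rₚ Mₚ :=
    ⟨fun r r' m ↦ show _ = algebraMap _ Rₚ r • _ by rw [← mul_smul (algebraMap B Rₚ r) r' m, ← Algebra.smul_def]⟩
  let l := (IsLocalizedModule.liftOfLE _ _ hle (LocalizedModule.mkLinearMap S M)
    (LocalizedModule.mkLinearMap I.primeCompl M)).extendScalarsOfIsLocalization S B
  haveI : IsLocalizedModule I.primeCompl (l.restrictScalars A) :=
    inferInstanceAs (IsLocalizedModule I.primeCompl
      (IsLocalizedModule.liftOfLE _ _ hle (LocalizedModule.mkLinearMap S M)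
        (LocalizedModule.mkLinearMap I.primeCompl M)))
  haveI : IsLocalizedModule (Algebra.algebraMapSubmonoid B I.primeCompl) l :=
    IsLocalizedModule.of_restrictScalars I.primeCompl ..
  haveI : Module.Projective B (LocalizedModule S M) := H i
  exact Module.projective_of_isLocalizedModule (Algebra.algebraMapSubmonoid B I.primeCompl) l

end aux

/-- **Concrete local-global principle 1.23.** Let `s 1, …, s n` be comaximal elements of
a commutative ring `A` and `M` an `A`-module.  Then `M` is finitely generated
(resp. finitely presented, resp. finitely generated projective) iff each localization
`M_{s i}` is a finitely generated (resp. finitely presented, resp. finitely generated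
projective) module over `A_{s i}`. -/
theorem localGlobal_concrete_finite_finitePresentation_projective
    {A : Type*} [CommRing A] {n : ℕ} (s : Fin n → A)
    (hs : Ideal.span (Set.range s) = ⊤)
    (M : Type*) [AddCommGroup M] [Module A M] :
    (Module.Finite A M ↔ ∀ i : Fin n,
        Module.Finite (Localization (Submonoid.powers (s i)))
          (LocalizedModule (Submonoid.powers (s i)) M)) ∧
    (Module.FinitePresentation A M ↔ ∀ i : Fin n,
        Module.FinitePresentation (Localization (Submonoid.powers (s i)))
          (LocalizedModule (Submonoid.powers (s i)) M)) ∧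
    ((Module.Finite A M ∧ Module.Projective A M) ↔ ∀ i : Fin n,
        Module.Finite (Localization (Submonoid.powers (s i)))
          (LocalizedModule (Submonoid.powers (s i)) M) ∧
        Module.Projective (Localization (Submonoid.powers (s i)))
          (LocalizedModule (Submonoid.powers (s i)) M)) := by
  refine ⟨⟨fun h i => ?_, auxFinite s hs M⟩,
    ⟨fun h i => ?_, auxFP s hs M⟩, ⟨fun h i => ?_, fun h => ?_⟩⟩
  · exact Module.Finite.of_isLocalizedModule (Submonoid.powers (s i))
      (LocalizedModule.mkLinearMap _ M)
  · exact inferInstance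
  · obtain ⟨h1, h2⟩ := h
    exact ⟨Module.Finite.of_isLocalizedModule (Submonoid.powers (s i))
        (LocalizedModule.mkLinearMap _ M),
      Module.projective_of_isLocalizedModule (Submonoid.powers (s i))
        (LocalizedModule.mkLinearMap _ M)⟩
  · have hFP : ∀ i : Fin n, Module.FinitePresentation (Localization (Submonoid.powers (s i)))
        (LocalizedModule (Submonoid.powers (s i)) M) := fun i =>
      haveI := (h i).1; haveI := (h i).2
      Module.finitePresentation_of_projective _ _
    haveI := auxFP s hs M hFP
    exact ⟨inferInstance, auxProj s hs M fun i => (h i).2⟩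
end

section
/- Let A be a commutative ring and M a finitely presented A-module. Then M is a finitely generated projective A-module if and only if for every prime ideal P of A the localization M_P is a free A_P-module. -/
/-- **Abstract local-global principle 1.25.** A finitely presented module `M` over a
commutative ring `A` is finitely generated projective if and only if its localization
`M_P` is a free `A_P`-module for every prime ideal `P` of `A`. -/
theorem finitePresentation_projective_iff_localizations_free
    {A : Type*} [CommRing A] (M : Type*) [AddCommGroup M] [Module A M]
    (hM : Module.FinitePresentation A M) :
    (Module.Finite A M ∧ Module.Projective A M) ↔
      ∀ (P : Ideal A) (hP : P.IsPrime),
        Module.Free (Localization.AtPrime P) (LocalizedModule P.primeCompl M) := by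
  constructor
  · rintro ⟨hfin, hproj⟩ P hP
    have : Module.FinitePresentation (Localization.AtPrime P)
        (LocalizedModule P.primeCompl M) := inferInstance
    have hflat : Module.Flat A M := Module.Flat.of_projective
    have : Module.Flat (Localization.AtPrime P) (LocalizedModule P.primeCompl M) :=
      inferInstance
    exact Module.free_of_flat_of_isLocalRing
  · intro H
    haveI := hM; refine ⟨inferInstance, ?_⟩
    exact Module.projective_of_localization_maximal fun I hI ↦
      have := H I hI.isPrime; Module.Projective.of_free
end

section
/- Let A be a commutative ring, s_1, …, s_n ∈ A with s_1·A + ⋯ + s_n·A = A, and let f : M → N and g : N → P be A-linear maps between A-modules. Then the sequence M → N → P (with maps f and g) is exact at N if and only if for each i the localized sequence M_{s_i} → N_{s_i} → P_{s_i} (with maps f_{s_i} and g_{s_i}) is exact at N_{s_i}. -/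
/-- **Concrete local-global principle 1.26.** Let `s 1, …, s n` be comaximal elements of
a commutative ring `A`.  A sequence `M → N → P` of `A`-linear maps is exact at `N`
if and only if each localized sequence `M_{s i} → N_{s i} → P_{s i}` is exact. -/
theorem localGlobal_concrete_exact_iff
    {A : Type*} [CommRing A] {n : ℕ} (s : Fin n → A)
    (hs : Ideal.span (Set.range s) = ⊤)
    {M N P : Type*} [AddCommGroup M] [Module A M] [AddCommGroup N] [Module A N]
    [AddCommGroup P] [Module A P] (f : M →ₗ[A] N) (g : N →ₗ[A] P) :
    Function.Exact f g ↔
      ∀ i : Fin n,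
        Function.Exact (LocalizedModule.map (Submonoid.powers (s i)) f)
          (LocalizedModule.map (Submonoid.powers (s i)) g) := by
  constructor
  · intro h i
    exact LocalizedModule.map_exact (Submonoid.powers (s i)) f g h
  · intro h
    apply exact_of_localized_span (Set.range s) hs
    rintro ⟨r, i, rfl⟩
    exact h i
end
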